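/- Let L be a finite group and consider Z ≀ L with the switch-walk-switch generating set L{±1}L. There exists α < 1 such that for all n, |S(n) \ S(n)^∞| / |S(n)| ≤ α^n; i.e., the proportion of the sphere of radius n lying in dead-end components decays exponentially. -/

import Mathlib

/-! ### Cayley graphs, word metric, spheres, annuli -/

/-- The Cayley graph of a group with respect to a set `S` of generators
(symmetrized, without loops). -/
def cayley (G : Type*) [Group G] (S : Set G) : SimpleGraph G where
  Adj g h := g ≠ h ∧ (g⁻¹ * h ∈ S ∨ h⁻¹ * g ∈ S)
  symm := by
    constructor
    rintro g h ⟨hne, hs⟩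
    exact ⟨hne.symm, hs.symm⟩
  loopless := by
    constructor
    rintro g ⟨hne, -⟩
    exact hne rfl

variable {G : Type*} [Group G]

/-- The word length of `g`, i.e. the distance from the identity to `g` in the Cayley graph. -/
noncomputable def wlen (S : Set G) (g : G) : ℕ :=
  (cayley G S).dist 1 g

/-- The ball of radius `n`. -/
def wBall (S : Set G) (n : ℕ) : Set G := {g | wlen S g ≤ n}

/-- The sphere of radius `n`. -/
def wSphere (S : Set G) (n : ℕ) : Set G := {g | wlen S g = n}

/-- The annulus of radius `n` and thickness `r`, i.e. `B(n+r) \ B(n-1)`. -/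
def wAnnulus (S : Set G) (n r : ℕ) : Set G := {g | n ≤ wlen S g ∧ wlen S g ≤ n + r}

/-- The part of `A` lying in infinite connected components of the subgraph of the
Cayley graph induced on `A`.  When the infinite component is unique (one-ended case)
this is exactly the infinite component of `A`. -/
def infPart (S : Set G) (A : Set G) : Set G :=
  {g | ∃ hg : g ∈ A, {w : ↥A | ((cayley G S).induce A).Reachable ⟨g, hg⟩ w}.Infinite}

/-- `S(n,r)^∞ = B(n+r) ∩ B(n-1)^{c,∞}`: the elements of the annulus connected to infinity. -/
def sphereInf (S : Set G) (n r : ℕ) : Set G :=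
  wAnnulus S n r ∩ infPart S {g | n ≤ wlen S g}

/-- The graph `S(n,r)^∞` is connected. -/
def SpheresConn (S : Set G) (n r : ℕ) : Prop :=
  ((cayley G S).induce (sphereInf S n r)).Connected

/-- The connection thickness `th_{G,S}(n)`: the least `r` such that `S(n,r)^∞` is connected. -/
noncomputable def connThickness (S : Set G) (n : ℕ) : ℕ :=
  sInf {r | SpheresConn S n r}

/-- The retreat depth of `g`: the least `d ≥ 0` such that `g` belongs to an infinite
component of the complement of `B(|g|-d-1)`. -/
noncomputable def retreatDepth (S : Set G) (g : G) : ℕ :=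
  sInf {d | g ∈ infPart S {x | wlen S g ≤ wlen S x + d}}

/-- `rd(G,S) = sup_g rd(g)`, as an extended natural number. -/
noncomputable def rdSup (S : Set G) : ℕ∞ :=
  ⨆ g : G, (retreatDepth S g : ℕ∞)

/-- `g` is a dead-end: no neighbour of `g` is further away from the identity. -/
def IsDeadEnd (S : Set G) (g : G) : Prop :=
  ∀ h : G, (cayley G S).Adj g h → wlen S h ≤ wlen S g

/-- `x` and `y` are connected by a path staying inside `A`. -/
def connectedIn (S : Set G) (A : Set G) (x y : G) : Prop :=
  ∃ w : (cayley G S).Walk x y, ∀ v ∈ w.support, v ∈ A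

/-- The travelling salesman distance from `x` to `y` through `A`: the length of the
shortest walk from `x` to `y` visiting every vertex of `A`. -/
noncomputable def tsDist {V : Type*} (H : SimpleGraph V) (x : V) (A : Set V) (y : V) : ℕ :=
  sInf {n | ∃ w : H.Walk x y, w.length = n ∧ ∀ a ∈ A, a ∈ w.support}

/-! ### Entropy of partitions -/

/-- Shannon entropy of the partition of the finite set `A` into blocks `P x` (the block
of `x ∈ A`), with respect to the uniform measure:
`H(Π) = -∑_{π ∈ Π} μ(π) log μ(π) = -(1/|A|) ∑_{x ∈ A} log (|P x|/|A|)`. -/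
noncomputable def partitionEntropy (A : Set G) (P : G → Set G) : ℝ :=
  -(1 / (Nat.card ↥A : ℝ)) * ∑ᶠ x ∈ A, Real.log ((Nat.card ↥(P x) : ℝ) / (Nat.card ↥A : ℝ))

/-- Normalised entropy `h(Π) = H(Π)/log |Π|`, where `|Π|` is the number of blocks. -/
noncomputable def normalizedEntropy (A : Set G) (P : G → Set G) : ℝ :=
  partitionEntropy A P / Real.log (Nat.card ↥(P '' A))

/-- The block of `x` in the partition `Π(n,r)` of `S(n)`: elements of `S(n)` joined
to `x` by a path inside the annulus `S(n,r)`. -/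
def piBlock (S : Set G) (n r : ℕ) (x : G) : Set G :=
  {y | y ∈ wSphere S n ∧ connectedIn S (wAnnulus S n r) x y}

/-- The block of `x` in the partition `Π(n,r)^∞` of `S(n)^∞`: elements of `S(n)^∞`
joined to `x` by a path inside `S(n,r)^∞`. -/
def piBlockInf (S : Set G) (n r : ℕ) (x : G) : Set G :=
  {y | y ∈ sphereInf S n 0 ∧ connectedIn S (sphereInf S n r) x y}

/-! ### Wreath products -/

/-- Finitely supported functions `Γ → L`, as a subgroup of the product group. -/
def LampGroup (Γ L : Type*) [Group Γ] [Group L] : Subgroup (Γ → L) where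
  carrier := {f | (Function.mulSupport f).Finite}
  one_mem' := by
    refine Set.Finite.subset Set.finite_empty fun x hx => ?_
    exact hx rfl
  mul_mem' := by
    intro a b ha hb
    exact (Set.Finite.union ha hb).subset (Function.mulSupport_mul a b)
  inv_mem' := by
    intro a ha
    refine ha.subset fun x hx => ?_
    simp only [Function.mem_mulSupport, Pi.inv_apply, ne_eq, inv_eq_one] at hx
    exact hx

variable (Γ L : Type*) [Group Γ] [Group L]

/-- Translation action of `Γ` on finitely supported lamp configurations. -/
noncomputable def shiftAut (γ : Γ) : ↥(LampGroup Γ L) ≃* ↥(LampGroup Γ L) where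
  toFun f := ⟨fun x => (f : Γ → L) (γ⁻¹ * x), by
    show (Function.mulSupport fun x => (f : Γ → L) (γ⁻¹ * x)).Finite
    exact Set.Finite.preimage ((mul_right_injective γ⁻¹).injOn) f.2⟩
  invFun f := ⟨fun x => (f : Γ → L) (γ * x), by
    show (Function.mulSupport fun x => (f : Γ → L) (γ * x)).Finite
    exact Set.Finite.preimage ((mul_right_injective γ).injOn) f.2⟩
  left_inv := by
    intro f
    apply Subtype.ext
    funext x
    simp
  right_inv := by
    intro f
    apply Subtype.ext
    funext x
    simp
  map_mul' := by
    intro f g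
    apply Subtype.ext
    rfl

/-- The action homomorphism `Γ →* Aut(⊕_Γ L)`. -/
noncomputable def shiftHom : Γ →* MulAut ↥(LampGroup Γ L) where
  toFun := shiftAut Γ L
  map_one' := by
    apply MulEquiv.ext
    intro f
    apply Subtype.ext
    funext x
    simp [shiftAut]
  map_mul' := by
    intro a b
    apply MulEquiv.ext
    intro f
    apply Subtype.ext
    funext x
    simp [shiftAut, mul_assoc]

/-- The (restricted) wreath product `Γ ≀ L = Γ ⋉ (⊕_Γ L)`. -/
abbrev Wreath := ↥(LampGroup Γ L) ⋊[shiftHom Γ L] Γ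

open Classical in
/-- The element `(e_Γ, δ_l)` of the wreath product: lamp `l` at the identity. -/
noncomputable def lampElt (l : L) : Wreath Γ L :=
  ⟨⟨fun x => if x = (1 : Γ) then l else 1, by
    refine Set.Finite.subset (Set.finite_singleton (1 : Γ)) fun x hx => ?_
    rcases eq_or_ne x 1 with h | h
    · simp [h]
    · exact absurd (if_neg h) hx⟩, 1⟩

/-- The element `(γ, Id)` of the wreath product. -/
def baseElt (γ : Γ) : Wreath Γ L := ⟨1, γ⟩

/-- The "switch-walk-switch" generating set `L S_Γ L`. -/
noncomputable def swsw (SΓ : Set Γ) : Set (Wreath Γ L) :=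
  {g | ∃ l l' : L, ∃ s ∈ SΓ, g = lampElt Γ L l * baseElt Γ L s * lampElt Γ L l'}

/-- The "switch or walk" generating set `S_Γ ∪ S_L`. -/
noncomputable def walkOrSwitch (SΓ : Set Γ) (SL : Set L) : Set (Wreath Γ L) :=
  (baseElt Γ L '' SΓ) ∪ (lampElt Γ L '' SL)

/-- `ℤ` written multiplicatively. -/
abbrev MZ := Multiplicative ℤ

/-- The generating set `{±1}` of `ℤ`. -/
def genZ : Set MZ := {Multiplicative.ofAdd 1, Multiplicative.ofAdd (-1)}

/-- The ladder `ℤ × ℤ/2ℤ` written multiplicatively. -/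
abbrev Ladder := Multiplicative (ℤ × ZMod 2)

/-- The generating set `{(±1,0), (0,1)}` of the ladder. -/
def genLadder : Set Ladder :=
  {Multiplicative.ofAdd (1, 0), Multiplicative.ofAdd (-1, 0), Multiplicative.ofAdd (0, 1)}

/-- The set of vertices of the minimal subtree of a tree containing a set `X`:
all vertices lying on a geodesic between two points of `X`. -/
def treeHull {V : Type*} (H : SimpleGraph V) (X : Set V) : Set V :=
  {v | ∃ x ∈ X, ∃ y ∈ X, H.dist x v + H.dist v y = H.dist x y}


section WreathAux

open Multiplicative

variable {L : Type*} [Group L]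

/-- position coordinate -/
noncomputable def tpos (g : Wreath MZ L) : ℤ := Multiplicative.toAdd g.right

/-- lamp coordinate -/
noncomputable def lamp (g : Wreath MZ L) (z : ℤ) : L :=
  (g.left : MZ → L) (Multiplicative.ofAdd z)

lemma lamp_suppFinite (g : Wreath MZ L) :
    (Function.mulSupport fun z => lamp g z).Finite := by
  have h2 : (Function.mulSupport ((g.left : MZ → L))).Finite := g.left.2
  have : (Function.mulSupport fun z : ℤ => lamp g z) ⊆
      Multiplicative.toAdd '' (Function.mulSupport ((g.left : MZ → L))) := by
    intro z hz
    exact ⟨Multiplicative.ofAdd z, hz, rfl⟩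
  exact (h2.image _).subset this

noncomputable def suppF (g : Wreath MZ L) : Finset ℤ := (lamp_suppFinite g).toFinset

lemma mem_suppF {g : Wreath MZ L} {z : ℤ} : z ∈ suppF g ↔ lamp g z ≠ 1 := by
  simp [suppF, Function.mulSupport]

noncomputable def EF (g : Wreath MZ L) : Finset ℤ := insert 0 (insert (tpos g) (suppF g))

lemma EF_nonempty (g : Wreath MZ L) : (EF g).Nonempty := ⟨0, by simp [EF]⟩

noncomputable def Pm (g : Wreath MZ L) : ℤ := (EF g).max' (EF_nonempty g)
noncomputable def Qm (g : Wreath MZ L) : ℤ := (EF g).min' (EF_nonempty g)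

lemma Pm_nonneg (g : Wreath MZ L) : 0 ≤ Pm g :=
  Finset.le_max' _ 0 (by simp [EF])

lemma Qm_nonpos (g : Wreath MZ L) : Qm g ≤ 0 :=
  Finset.min'_le _ 0 (by simp [EF])

lemma tpos_le_Pm (g : Wreath MZ L) : tpos g ≤ Pm g :=
  Finset.le_max' _ _ (by simp [EF])

lemma Qm_le_tpos (g : Wreath MZ L) : Qm g ≤ tpos g :=
  Finset.min'_le _ _ (by simp [EF])

lemma le_Pm_of_lamp {g : Wreath MZ L} {z : ℤ} (h : lamp g z ≠ 1) : z ≤ Pm g :=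
  Finset.le_max' _ _ (by simp [EF, mem_suppF, h])

lemma Qm_le_of_lamp {g : Wreath MZ L} {z : ℤ} (h : lamp g z ≠ 1) : Qm g ≤ z :=
  Finset.min'_le _ _ (by simp [EF, mem_suppF, h])

lemma abs_tpos_le (g : Wreath MZ L) : |tpos g| ≤ Pm g - Qm g := by
  rcases abs_cases (tpos g) with ⟨h, _⟩ | ⟨h, _⟩ <;> rw [h] <;>
    [linarith [tpos_le_Pm g, Qm_nonpos g]; linarith [Qm_le_tpos g, Pm_nonneg g]]

/-- the word-length formula (without the exceptional correction) -/
noncomputable def lenZ (g : Wreath MZ L) : ℤ := 2 * (Pm g - Qm g) - |tpos g|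

lemma lenZ_nonneg (g : Wreath MZ L) : 0 ≤ lenZ g := by
  have := abs_tpos_le g
  have h1 : 0 ≤ Pm g - Qm g := by linarith [Pm_nonneg g, Qm_nonpos g]
  unfold lenZ; linarith

lemma tpos_one : tpos (1 : Wreath MZ L) = 0 := rfl

lemma lamp_one (z : ℤ) : lamp (1 : Wreath MZ L) z = 1 := rfl

lemma wg_ext {g h : Wreath MZ L} (ht : tpos g = tpos h) (hl : ∀ z, lamp g z = lamp h z) :
    g = h := by
  apply SemidirectProduct.ext
  · apply Subtype.ext
    funext x
    have := hl (Multiplicative.toAdd x)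
    simpa [lamp] using this
  · exact ht

end WreathAux
section StepAux

open Multiplicative

variable {L : Type*} [Group L]

lemma coe_mul_lamp (a b : ↥(LampGroup MZ L)) (x : MZ) :
    ((a * b : ↥(LampGroup MZ L)) : MZ → L) x = (a : MZ → L) x * (b : MZ → L) x := rfl

lemma shift_apply (γ : MZ) (n : ↥(LampGroup MZ L)) (x : MZ) :
    ((shiftHom MZ L γ n : ↥(LampGroup MZ L)) : MZ → L) x = (n : MZ → L) (γ⁻¹ * x) := rfl

lemma lampElt_left_apply (l : L) (x : MZ) :
    ((lampElt MZ L l).left : MZ → L) x = if x = 1 then l else 1 := by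
  unfold lampElt
  split_ifs with h <;> simp [h]

lemma lampElt_right (l : L) : (lampElt MZ L l).right = 1 := rfl

lemma baseElt_left (γ : MZ) : ((baseElt MZ L γ).left : MZ → L) = fun _ => 1 := rfl

lemma baseElt_right (γ : MZ) : (baseElt MZ L γ).right = γ := rfl

noncomputable def stepElt (l : L) (ε : ℤ) (l' : L) : Wreath MZ L :=
  lampElt MZ L l * baseElt MZ L (Multiplicative.ofAdd ε) * lampElt MZ L l'

lemma stepElt_right (l : L) (ε : ℤ) (l' : L) :
    (stepElt l ε l').right = Multiplicative.ofAdd ε := by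
  simp [stepElt, SemidirectProduct.mul_right, lampElt_right, baseElt_right]

lemma stepElt_left (l : L) (ε : ℤ) (l' : L) (x : MZ) :
    ((stepElt l ε l').left : MZ → L) x =
      (if x = 1 then l else 1) * (if x = Multiplicative.ofAdd ε then l' else 1) := by
  classical
  unfold stepElt
  rw [SemidirectProduct.mul_left, SemidirectProduct.mul_left]
  rw [coe_mul_lamp, coe_mul_lamp, shift_apply, shift_apply]
  rw [lampElt_left_apply, lampElt_left_apply, baseElt_left]
  simp only [SemidirectProduct.mul_right, baseElt_right, lampElt_right, inv_one, one_mul, mul_one, mul_inv_rev]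
  congr 1
  by_cases h : (Multiplicative.ofAdd ε)⁻¹ * x = 1
  · have : x = Multiplicative.ofAdd ε := by
      rwa [inv_mul_eq_one, eq_comm] at h
    simp [h, this]
  · have : ¬ x = Multiplicative.ofAdd ε := by
      intro hx; exact h (by rw [hx]; group)
    simp [h, this]

lemma tpos_mul_step (g : Wreath MZ L) (l : L) (ε : ℤ) (l' : L) :
    tpos (g * stepElt l ε l') = tpos g + ε := by
  unfold tpos
  rw [SemidirectProduct.mul_right, stepElt_right]
  simp

lemma lamp_mul_step (g : Wreath MZ L) (l : L) (ε : ℤ) (l' : L) (z : ℤ) :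
    lamp (g * stepElt l ε l') z =
      lamp g z * ((if z = tpos g then l else 1) * (if z = tpos g + ε then l' else 1)) := by
  classical
  unfold lamp
  rw [SemidirectProduct.mul_left, coe_mul_lamp, shift_apply, stepElt_left]
  congr 1
  have e1 : ((g.right)⁻¹ * Multiplicative.ofAdd z = 1) ↔ z = tpos g := by
    rw [inv_mul_eq_one]
    constructor
    · intro h; simp [tpos, h]
    · intro h; subst h; simp [tpos]
  have e2 : ((g.right)⁻¹ * Multiplicative.ofAdd z = Multiplicative.ofAdd ε) ↔ z = tpos g + ε := by
    rw [inv_mul_eq_iff_eq_mul]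
    constructor
    · intro h
      have := congrArg Multiplicative.toAdd h
      simpa [tpos, add_comm] using this
    · intro h
      subst h
      have : Multiplicative.ofAdd (tpos g + ε) = g.right * Multiplicative.ofAdd ε := by
        rw [ofAdd_add]
        simp [tpos, mul_comm]
      exact this
  congr 1
  · simp only [e1]
  · simp only [e2]

end StepAux
section AdjAux

open Multiplicative

variable {L : Type*} [Group L]

/-- the Cayley graph in question -/
noncomputable abbrev WGr (L : Type*) [Group L] : SimpleGraph (Wreath MZ L) :=
  cayley (Wreath MZ L) (swsw MZ L genZ)

lemma mem_swsw_iff {s : Wreath MZ L} :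
    s ∈ swsw MZ L genZ ↔ ∃ (l l' : L) (ε : ℤ), (ε = 1 ∨ ε = -1) ∧ s = stepElt l ε l' := by
  constructor
  · rintro ⟨l, l', a, ha, rfl⟩
    rcases ha with ha | ha
    · exact ⟨l, l', 1, Or.inl rfl, by rw [ha]; rfl⟩
    · exact ⟨l, l', -1, Or.inr rfl, by rw [ha]; rfl⟩
  · rintro ⟨l, l', ε, hε, rfl⟩
    refine ⟨l, l', Multiplicative.ofAdd ε, ?_, rfl⟩
    rcases hε with rfl | rfl
    · exact Or.inl rfl
    · exact Or.inr rfl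

lemma tpos_stepElt (l : L) (ε : ℤ) (l' : L) : tpos (stepElt l ε l' : Wreath MZ L) = ε := by
  have := tpos_mul_step (1 : Wreath MZ L) l ε l'
  rwa [one_mul, tpos_one, zero_add] at this

lemma lamp_stepElt (l : L) (ε : ℤ) (l' : L) (z : ℤ) :
    lamp (stepElt l ε l' : Wreath MZ L) z =
      (if z = 0 then l else 1) * (if z = ε then l' else 1) := by
  have := lamp_mul_step (1 : Wreath MZ L) l ε l' z
  rwa [one_mul, lamp_one, one_mul, tpos_one, zero_add] at this

lemma stepElt_mul_inv (l : L) (ε : ℤ) (l' : L) (hε : ε ≠ 0) :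
    stepElt l ε l' * stepElt l'⁻¹ (-ε) l⁻¹ = (1 : Wreath MZ L) := by
  apply wg_ext
  · rw [tpos_mul_step, tpos_stepElt, tpos_one]; ring
  · intro z
    rw [lamp_mul_step, lamp_stepElt, tpos_stepElt, lamp_one]
    have hee : ε + -ε = 0 := by ring
    rw [hee]
    by_cases h0 : z = 0
    · have h2 : ¬ z = ε := by rw [h0]; exact fun hc => hε hc.symm
      rw [if_pos h0, if_neg h2, if_neg h2, if_pos h0, mul_one, one_mul, mul_inv_cancel]
    · by_cases h2 : z = ε
      · rw [if_neg h0, if_pos h2, if_pos h2, if_neg h0, one_mul, mul_one, mul_inv_cancel]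
      · rw [if_neg h0, if_neg h2, if_neg h2, if_neg h0]; simp

lemma stepElt_inv (l : L) (ε : ℤ) (l' : L) (hε : ε ≠ 0) :
    (stepElt l ε l')⁻¹ = stepElt l'⁻¹ (-ε) l⁻¹ :=
  inv_eq_of_mul_eq_one_right (stepElt_mul_inv l ε l' hε)

lemma adj_iff_step {g h : Wreath MZ L} :
    (WGr L).Adj g h ↔ g ≠ h ∧
      ∃ (l l' : L) (ε : ℤ), (ε = 1 ∨ ε = -1) ∧ h = g * stepElt l ε l' := by
  constructor
  · rintro ⟨hne, hs | hs⟩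
    · rw [mem_swsw_iff] at hs
      obtain ⟨l, l', ε, hε, he⟩ := hs
      exact ⟨hne, l, l', ε, hε, by rw [← he]; group⟩
    · rw [mem_swsw_iff] at hs
      obtain ⟨l, l', ε, hε, he⟩ := hs
      have hg : g = h * stepElt l ε l' := by rw [← he]; group
      have hε0 : ε ≠ 0 := by rcases hε with rfl | rfl <;> norm_num
      refine ⟨hne, l'⁻¹, l⁻¹, -ε, ?_, ?_⟩
      · rcases hε with rfl | rfl
        · exact Or.inr rfl
        · exact Or.inl (by norm_num)
      · rw [← stepElt_inv l ε l' hε0, hg]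
        group
  · rintro ⟨hne, l, l', ε, hε, rfl⟩
    refine ⟨hne, Or.inl ?_⟩
    rw [mem_swsw_iff]
    exact ⟨l, l', ε, hε, by group⟩

lemma adj_tpos {g h : Wreath MZ L} (hadj : (WGr L).Adj g h) :
    tpos h = tpos g + 1 ∨ tpos h = tpos g - 1 := by
  rw [adj_iff_step] at hadj
  obtain ⟨-, l, l', ε, hε, rfl⟩ := hadj
  rw [tpos_mul_step]
  rcases hε with rfl | rfl
  · exact Or.inl rfl
  · exact Or.inr (by ring)

lemma adj_lamp {g h : Wreath MZ L} (hadj : (WGr L).Adj g h) :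
    ∀ z : ℤ, z ≠ tpos g → z ≠ tpos h → lamp h z = lamp g z := by
  rw [adj_iff_step] at hadj
  obtain ⟨-, l, l', ε, hε, rfl⟩ := hadj
  intro z hz1 hz2
  rw [tpos_mul_step] at hz2
  rw [lamp_mul_step]
  simp [hz1, hz2]

lemma adj_construct {g h : Wreath MZ L} (ε : ℤ) (hε : ε = 1 ∨ ε = -1)
    (ht : tpos h = tpos g + ε)
    (hl : ∀ z : ℤ, z ≠ tpos g → z ≠ tpos h → lamp h z = lamp g z) :
    (WGr L).Adj g h := by
  have hε0 : ε ≠ 0 := by rcases hε with rfl | rfl <;> norm_num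
  have htne : tpos g ≠ tpos h := by rw [ht]; intro hc; apply hε0; linarith
  have heq : h = g * stepElt ((lamp g (tpos g))⁻¹ * lamp h (tpos g)) ε
      ((lamp g (tpos h))⁻¹ * lamp h (tpos h)) := by
    apply wg_ext
    · rw [tpos_mul_step, ht]
    · intro z
      rw [lamp_mul_step]
      by_cases h1 : z = tpos g
      · have h2 : ¬ z = tpos g + ε := by
          rw [h1, ← ht]; exact fun hc => htne hc
        rw [if_pos h1, if_neg h2, mul_one, h1, mul_inv_cancel_left]
      · by_cases h2 : z = tpos g + ε
        · have hz : z = tpos h := by rw [ht, h2]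
          rw [if_neg h1, if_pos h2, one_mul, hz, mul_inv_cancel_left]
        · have h2' : z ≠ tpos h := fun hc => h2 (by rw [← ht, hc])
          rw [if_neg h1, if_neg h2, mul_one, mul_one, hl z h1 h2']
  rw [adj_iff_step]
  refine ⟨fun hc => htne (congrArg tpos hc), _, _, ε, hε, heq⟩

end AdjAux
section LenAux

open Multiplicative

variable {L : Type*} [Group L]

lemma mem_EF {g : Wreath MZ L} {z : ℤ} :
    z ∈ EF g ↔ z = 0 ∨ z = tpos g ∨ lamp g z ≠ 1 := by
  simp [EF, mem_suppF]

lemma Pm_le {g : Wreath MZ L} {c : ℤ} (h0 : 0 ≤ c) (ht : tpos g ≤ c)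
    (hl : ∀ z, c < z → lamp g z = 1) : Pm g ≤ c := by
  apply Finset.max'_le
  intro z hz
  rw [mem_EF] at hz
  rcases hz with rfl | rfl | hz
  · exact h0
  · exact ht
  · by_contra hc
    exact hz (hl z (by linarith [not_le.mp hc]))

lemma le_Qm {g : Wreath MZ L} {c : ℤ} (h0 : c ≤ 0) (ht : c ≤ tpos g)
    (hl : ∀ z, z < c → lamp g z = 1) : c ≤ Qm g := by
  apply Finset.le_min'
  intro z hz
  rw [mem_EF] at hz
  rcases hz with rfl | rfl | hz
  · exact h0
  · exact ht
  · by_contra hc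
    exact hz (hl z (by linarith [not_le.mp hc]))

lemma Pm_mem (g : Wreath MZ L) : Pm g = 0 ∨ Pm g = tpos g ∨ lamp g (Pm g) ≠ 1 :=
  mem_EF.mp (Finset.max'_mem _ _)

lemma Qm_mem (g : Wreath MZ L) : Qm g = 0 ∨ Qm g = tpos g ∨ lamp g (Qm g) ≠ 1 :=
  mem_EF.mp (Finset.min'_mem _ _)

lemma lamp_eq_one_of_gt {g : Wreath MZ L} {z : ℤ} (h : Pm g < z) : lamp g z = 1 := by
  by_contra hc
  exact absurd (le_Pm_of_lamp hc) (not_le.mpr h)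

lemma lamp_eq_one_of_lt {g : Wreath MZ L} {z : ℤ} (h : z < Qm g) : lamp g z = 1 := by
  by_contra hc
  exact absurd (Qm_le_of_lamp hc) (not_le.mpr h)

lemma adj_mul_step (g : Wreath MZ L) (l : L) (ε : ℤ) (l' : L) (hε : ε = 1 ∨ ε = -1) :
    (WGr L).Adj g (g * stepElt l ε l') := by
  have hε0 : ε ≠ 0 := by rcases hε with rfl | rfl <;> norm_num
  rw [adj_iff_step]
  refine ⟨?_, l, l', ε, hε, rfl⟩
  intro hc
  have := congrArg tpos hc
  rw [tpos_mul_step] at this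
  exact hε0 (by linarith)

/-- the exceptional elements: a single nontrivial lamp at the origin, walker at origin -/
def exceptionalP (g : Wreath MZ L) : Prop :=
  g ≠ 1 ∧ tpos g = 0 ∧ Pm g = 0 ∧ Qm g = 0

open Classical in
/-- the true word length -/
noncomputable def lenT (g : Wreath MZ L) : ℕ :=
  (lenZ g).toNat + (if exceptionalP g then 2 else 0)

lemma lenZ_exc {g : Wreath MZ L} (h : exceptionalP g) : lenZ g = 0 := by
  unfold lenZ
  rw [h.2.1, h.2.2.1, h.2.2.2]
  simp

lemma lenT_exc {g : Wreath MZ L} (h : exceptionalP g) : lenT g = 2 := by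
  unfold lenT
  rw [if_pos h, lenZ_exc h]
  rfl

lemma lenT_nonexc {g : Wreath MZ L} (h : ¬ exceptionalP g) : lenT g = (lenZ g).toNat := by
  unfold lenT
  rw [if_neg h, Nat.add_zero]

lemma eq_one_of_coords {g : Wreath MZ L} (ht : tpos g = 0) (hP : Pm g = 0) (hQ : Qm g = 0)
    (h0 : lamp g 0 = 1) : g = 1 := by
  apply wg_ext
  · rw [ht, tpos_one]
  · intro z
    rw [lamp_one]
    rcases lt_trichotomy z 0 with h | rfl | h
    · exact lamp_eq_one_of_lt (by rw [hQ]; exact h)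
    · exact h0
    · exact lamp_eq_one_of_gt (by rw [hP]; exact h)

end LenAux
section PredAux

open Multiplicative SimpleGraph

variable {L : Type*} [Group L]

lemma coords_step1 (g : Wreath MZ L) (ε : ℤ) :
    tpos (g * stepElt (1:L) ε 1) = tpos g + ε ∧
      ∀ z, lamp (g * stepElt (1:L) ε 1) z = lamp g z := by
  refine ⟨tpos_mul_step g 1 ε 1, fun z => ?_⟩
  rw [lamp_mul_step]
  simp

lemma predA {g : Wreath MZ L} (h0 : 0 ≤ tpos g) (hP : tpos g < Pm g) :
    ∃ h, (WGr L).Adj h g ∧ ¬ exceptionalP h ∧ lenZ h ≤ lenZ g - 1 := by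
  refine ⟨g * stepElt (1:L) 1 1, (adj_mul_step g 1 1 1 (Or.inl rfl)).symm, ?_, ?_⟩
  · obtain ⟨ht, hl⟩ := coords_step1 g (1:ℤ)
    intro hexc
    rw [hexc.2.1] at ht
    omega
  · obtain ⟨ht, hl⟩ := coords_step1 g (1:ℤ)
    have hPm : Pm (g * stepElt (1:L) 1 1) = Pm g := by
      apply le_antisymm
      · refine Pm_le (Pm_nonneg g) (by omega) ?_
        intro z hz
        rw [hl]
        exact lamp_eq_one_of_gt hz
      · rcases Pm_mem g with hm | hm | hm
        · rw [hm]; exact Pm_nonneg _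
        · omega
        · exact le_Pm_of_lamp (by rw [hl]; exact hm)
    have hQm : Qm (g * stepElt (1:L) 1 1) = Qm g := by
      apply le_antisymm
      · rcases Qm_mem g with hm | hm | hm
        · rw [hm]; exact Qm_nonpos _
        · have : Qm g = 0 := le_antisymm (Qm_nonpos g) (hm ▸ h0)
          rw [this]; exact Qm_nonpos _
        · exact Qm_le_of_lamp (by rw [hl]; exact hm)
      · refine le_Qm (Qm_nonpos g) (by have := Qm_le_tpos g; omega) ?_
        intro z hz
        rw [hl]
        exact lamp_eq_one_of_lt hz
    unfold lenZ
    rw [hPm, hQm, ht, abs_of_nonneg h0, abs_of_nonneg (by omega : (0:ℤ) ≤ tpos g + 1)]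
    omega

lemma predB {g : Wreath MZ L} (h0 : tpos g ≤ 0) (hQ : Qm g < tpos g) :
    ∃ h, (WGr L).Adj h g ∧ ¬ exceptionalP h ∧ lenZ h ≤ lenZ g - 1 := by
  refine ⟨g * stepElt (1:L) (-1) 1, (adj_mul_step g 1 (-1) 1 (Or.inr rfl)).symm, ?_, ?_⟩
  · obtain ⟨ht, hl⟩ := coords_step1 g (-1:ℤ)
    intro hexc
    rw [hexc.2.1] at ht
    omega
  · obtain ⟨ht, hl⟩ := coords_step1 g (-1:ℤ)
    have hPm : Pm (g * stepElt (1:L) (-1) 1) = Pm g := by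
      apply le_antisymm
      · refine Pm_le (Pm_nonneg g) (by have := tpos_le_Pm g; omega) ?_
        intro z hz
        rw [hl]
        exact lamp_eq_one_of_gt hz
      · rcases Pm_mem g with hm | hm | hm
        · rw [hm]; exact Pm_nonneg _
        · have : Pm g = 0 := le_antisymm (hm ▸ h0) (Pm_nonneg g)
          rw [this]; exact Pm_nonneg _
        · exact le_Pm_of_lamp (by rw [hl]; exact hm)
    have hQm : Qm (g * stepElt (1:L) (-1) 1) = Qm g := by
      apply le_antisymm
      · rcases Qm_mem g with hm | hm | hm
        · rw [hm]; exact Qm_nonpos _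
        · omega
        · exact Qm_le_of_lamp (by rw [hl]; exact hm)
      · refine le_Qm (Qm_nonpos g) (by omega) ?_
        intro z hz
        rw [hl]
        exact lamp_eq_one_of_lt hz
    unfold lenZ
    rw [hPm, hQm, ht, abs_of_nonpos h0, abs_of_nonpos (by omega : tpos g + -1 ≤ 0)]
    omega

lemma predC {g : Wreath MZ L} (h0 : 0 < tpos g) (hP : tpos g = Pm g) :
    ∃ h, (WGr L).Adj h g ∧ ¬ exceptionalP h ∧ lenZ h ≤ lenZ g - 1 := by
  set t := tpos g with htdef
  set h := g * stepElt (lamp g t)⁻¹ (-1) (lamp g (t-1))⁻¹ with hdef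
  have ht : tpos h = t - 1 := by rw [hdef, tpos_mul_step]; ring
  have hlt : lamp h t = 1 := by
    rw [hdef, lamp_mul_step, if_pos rfl, if_neg (by omega : ¬ t = tpos g + -1)]
    simp
  have hlt1 : lamp h (t-1) = 1 := by
    rw [hdef, lamp_mul_step, if_neg (by omega : ¬ t - 1 = tpos g),
      if_pos (by omega : t - 1 = tpos g + -1)]
    simp
  have hl : ∀ z, z ≠ t → z ≠ t - 1 → lamp h z = lamp g z := by
    intro z h1 h2
    rw [hdef, lamp_mul_step, if_neg h1, if_neg (by omega : ¬ z = tpos g + -1)]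
    simp
  have hPm : Pm h ≤ t - 1 := by
    refine Pm_le (by omega) (by omega) ?_
    intro z hz
    rcases eq_or_ne z t with rfl | hzt
    · exact hlt
    · rw [hl z hzt (by omega)]
      exact lamp_eq_one_of_gt (by omega)
  have hQm : Qm h = Qm g := by
    have hQ0 : Qm g ≤ 0 := Qm_nonpos g
    apply le_antisymm
    · rcases eq_or_lt_of_le hQ0 with hq | hq
      · rw [hq]; exact Qm_nonpos _
      · rcases Qm_mem g with hm | hm | hm
        · omega
        · omega
        · exact Qm_le_of_lamp (by rw [hl _ (by omega) (by omega)]; exact hm)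
    · refine le_Qm hQ0 (by omega) ?_
      intro z hz
      rw [hl z (by omega) (by omega)]
      exact lamp_eq_one_of_lt hz
  refine ⟨h, (adj_mul_step g _ (-1) _ (Or.inr rfl)).symm, ?_, ?_⟩
  · intro hexc
    have ht0 : t = 1 := by have := hexc.2.1; omega
    apply hexc.1
    refine eq_one_of_coords hexc.2.1 hexc.2.2.1 hexc.2.2.2 ?_
    have : (0:ℤ) = t - 1 := by omega
    rw [this]; exact hlt1
  · have habs : |t - 1| = t - 1 := abs_of_nonneg (by omega)
    have habs2 : |tpos g| = t := abs_of_nonneg (by omega)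
    unfold lenZ
    rw [ht, ← htdef, habs, habs2]
    have := Qm_nonpos g
    omega

lemma predD {g : Wreath MZ L} (h0 : tpos g < 0) (hQ : tpos g = Qm g) :
    ∃ h, (WGr L).Adj h g ∧ ¬ exceptionalP h ∧ lenZ h ≤ lenZ g - 1 := by
  set t := tpos g with htdef
  set h := g * stepElt (lamp g t)⁻¹ 1 (lamp g (t+1))⁻¹ with hdef
  have ht : tpos h = t + 1 := by rw [hdef, tpos_mul_step]
  have hlt : lamp h t = 1 := by
    rw [hdef, lamp_mul_step, if_pos rfl, if_neg (by omega : ¬ t = tpos g + 1)]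
    simp
  have hlt1 : lamp h (t+1) = 1 := by
    rw [hdef, lamp_mul_step, if_neg (by omega : ¬ t + 1 = tpos g),
      if_pos (by omega : t + 1 = tpos g + 1)]
    simp
  have hl : ∀ z, z ≠ t → z ≠ t + 1 → lamp h z = lamp g z := by
    intro z h1 h2
    rw [hdef, lamp_mul_step, if_neg h1, if_neg (by omega : ¬ z = tpos g + 1)]
    simp
  have hQm : t + 1 ≤ Qm h := by
    refine le_Qm (by omega) (by omega) ?_
    intro z hz
    rcases eq_or_ne z t with rfl | hzt
    · exact hlt
    · rw [hl z hzt (by omega)]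
      exact lamp_eq_one_of_lt (by omega)
  have hPm : Pm h = Pm g := by
    have hP0 : 0 ≤ Pm g := Pm_nonneg g
    apply le_antisymm
    · refine Pm_le hP0 (by omega) ?_
      intro z hz
      rw [hl z (by omega) (by omega)]
      exact lamp_eq_one_of_gt hz
    · rcases eq_or_lt_of_le hP0 with hp | hp
      · rw [← hp]; exact Pm_nonneg _
      · rcases Pm_mem g with hm | hm | hm
        · omega
        · omega
        · exact le_Pm_of_lamp (by rw [hl _ (by omega) (by omega)]; exact hm)
  refine ⟨h, (adj_mul_step g _ 1 _ (Or.inl rfl)).symm, ?_, ?_⟩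
  · intro hexc
    have ht0 : t = -1 := by have := hexc.2.1; omega
    apply hexc.1
    refine eq_one_of_coords hexc.2.1 hexc.2.2.1 hexc.2.2.2 ?_
    have : (0:ℤ) = t + 1 := by omega
    rw [this]; exact hlt1
  · have habs : |t + 1| = -(t + 1) := abs_of_nonpos (by omega)
    have habs2 : |tpos g| = -t := abs_of_neg h0
    unfold lenZ
    rw [ht, ← htdef, habs, habs2]
    have := Pm_nonneg g
    omega

lemma exists_pred (g : Wreath MZ L) (hg : g ≠ 1) :
    ∃ h, (WGr L).Adj h g ∧ lenT h < lenT g := by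
  by_cases hexc : exceptionalP g
  · refine ⟨g * stepElt (1:L) 1 1, (adj_mul_step g 1 1 1 (Or.inl rfl)).symm, ?_⟩
    obtain ⟨ht, hl⟩ := coords_step1 g (1:ℤ)
    rw [hexc.2.1, zero_add] at ht
    have hne : ¬ exceptionalP (g * stepElt (1:L) 1 1) := by
      intro hc; rw [hc.2.1] at ht; omega
    have hPm : Pm (g * stepElt (1:L) 1 1) ≤ 1 := by
      refine Pm_le (by omega) (by omega) ?_
      intro z hz
      rw [hl]
      exact lamp_eq_one_of_gt (by rw [hexc.2.2.1]; omega)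
    have hQm : 0 ≤ Qm (g * stepElt (1:L) 1 1) := by
      refine le_Qm (by omega) (by omega) ?_
      intro z hz
      rw [hl]
      exact lamp_eq_one_of_lt (by rw [hexc.2.2.2]; omega)
    rw [lenT_nonexc hne, lenT_exc hexc]
    have h1 : lenZ (g * stepElt (1:L) 1 1) ≤ 1 := by
      unfold lenZ
      rw [ht]
      rw [abs_one]
      omega
    omega
  · have key : ∃ h, (WGr L).Adj h g ∧ ¬ exceptionalP h ∧ lenZ h ≤ lenZ g - 1 := by
      rcases lt_trichotomy (tpos g) 0 with ht | ht | ht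
      · rcases eq_or_lt_of_le (Qm_le_tpos g) with hq | hq
        · exact predD ht hq.symm
        · exact predB (by omega) hq
      · rcases eq_or_lt_of_le (Pm_nonneg g) with hp | hp
        · rcases eq_or_lt_of_le (Qm_nonpos g) with hq | hq
          · exact absurd ⟨hg, ht, hp.symm, hq⟩ hexc
          · exact predB (by omega) (by omega)
        · exact predA (by omega) (by omega)
      · rcases eq_or_lt_of_le (tpos_le_Pm g) with hp | hp
        · exact predC ht hp
        · exact predA (by omega) hp
    obtain ⟨h, hadj, hne, hlen⟩ := key
    refine ⟨h, hadj, ?_⟩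
    rw [lenT_nonexc hne, lenT_nonexc hexc]
    have := lenZ_nonneg h
    have := lenZ_nonneg g
    omega

lemma exists_walk_len (g : Wreath MZ L) : ∃ w : (WGr L).Walk 1 g, w.length ≤ lenT g := by
  suffices H : ∀ N (g : Wreath MZ L), lenT g ≤ N → ∃ w : (WGr L).Walk 1 g, w.length ≤ lenT g by
    exact H (lenT g) g le_rfl
  intro N
  induction N with
  | zero =>
    intro g hg
    by_cases h1 : g = 1
    · subst h1; exact ⟨Walk.nil, by simp⟩
    · obtain ⟨h, _, hlt⟩ := exists_pred g h1
      omega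
  | succ N ih =>
    intro g hg
    by_cases h1 : g = 1
    · subst h1; exact ⟨Walk.nil, by simp⟩
    · obtain ⟨h, hadj, hlt⟩ := exists_pred g h1
      obtain ⟨w', hw'⟩ := ih h (by omega)
      exact ⟨w'.concat hadj, by rw [Walk.length_concat]; omega⟩

lemma reach_one (g : Wreath MZ L) : (WGr L).Reachable 1 g :=
  ⟨(exists_walk_len g).choose⟩

lemma wlen_le_lenT (g : Wreath MZ L) : wlen (swsw MZ L genZ) g ≤ lenT g := by
  obtain ⟨w, hw⟩ := exists_walk_len g
  exact le_trans (SimpleGraph.dist_le w) hw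

end PredAux
section LowerAux

open Multiplicative SimpleGraph

variable {L : Type*} [Group L]

lemma walk_disp {x y : Wreath MZ L} (w : (WGr L).Walk x y) :
    |tpos y - tpos x| ≤ (w.length : ℤ) := by
  induction w with
  | nil => simp
  | @cons x b y h p ih =>
    have hb := adj_tpos h
    have h1 : |tpos y - tpos x| ≤ |tpos y - tpos b| + |tpos b - tpos x| := abs_sub_le _ _ _
    have h2 : |tpos b - tpos x| = 1 := by
      rcases hb with hb | hb <;> rw [hb] <;> simp
    rw [Walk.length_cons]
    push_cast
    omega

lemma walk_visit {x y : Wreath MZ L} (w : (WGr L).Walk x y) (c : ℤ)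
    (hc : ∃ v ∈ w.support, tpos v = c) :
    |tpos x - c| + |c - tpos y| ≤ (w.length : ℤ) := by
  induction w with
  | nil =>
    obtain ⟨v, hv, rfl⟩ := hc
    simp only [Walk.support_nil, List.mem_singleton] at hv
    subst hv
    simp
  | @cons x b y h p ih =>
    obtain ⟨v, hv, rfl⟩ := hc
    rw [Walk.support_cons, List.mem_cons] at hv
    rcases hv with rfl | hv
    · have h1 := walk_disp (Walk.cons h p)
      rw [sub_self, abs_zero, zero_add, abs_sub_comm]
      exact h1
    · have ih' := ih ⟨v, hv, rfl⟩
      have hb := adj_tpos h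
      have h2 : |tpos b - tpos x| = 1 := by
        rcases hb with hb | hb <;> rw [hb] <;> simp
      have h3 : |tpos x - tpos v| ≤ |tpos x - tpos b| + |tpos b - tpos v| := abs_sub_le _ _ _
      rw [Walk.length_cons]
      rw [abs_sub_comm (tpos x) (tpos b)] at h3
      push_cast
      omega

lemma walk_visit2 {x y : Wreath MZ L} (w : (WGr L).Walk x y) (c d : ℤ)
    (hc : ∃ v ∈ w.support, tpos v = c) (hd : ∃ v ∈ w.support, tpos v = d) :
    min (|tpos x - c| + |c - d| + |d - tpos y|)
      (|tpos x - d| + |d - c| + |c - tpos y|) ≤ (w.length : ℤ) := by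
  induction w with
  | nil =>
    obtain ⟨v, hv, rfl⟩ := hc
    obtain ⟨v', hv', rfl⟩ := hd
    simp only [Walk.support_nil, List.mem_singleton] at hv hv'
    subst hv; subst hv'
    simp
  | @cons x b y h p ih =>
    obtain ⟨v, hv, rfl⟩ := hc
    obtain ⟨v', hv', rfl⟩ := hd
    rw [Walk.support_cons, List.mem_cons] at hv hv'
    rcases hv with rfl | hv
    · have h1 := walk_visit (Walk.cons h p) (tpos v') ⟨v', by
        rw [Walk.support_cons, List.mem_cons]
        rcases hv' with rfl | hv'
        · exact Or.inl rfl
        · exact Or.inr hv', rfl⟩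
      refine le_trans (min_le_left _ _) ?_
      rw [sub_self, abs_zero, zero_add]
      exact h1
    · rcases hv' with rfl | hv'
      · have h1 := walk_visit (Walk.cons h p) (tpos v) ⟨v, by
          rw [Walk.support_cons, List.mem_cons]; exact Or.inr hv, rfl⟩
        refine le_trans (min_le_right _ _) ?_
        rw [sub_self, abs_zero, zero_add]
        exact h1
      · have ih' := ih ⟨v, hv, rfl⟩ ⟨v', hv', rfl⟩
        have hb := adj_tpos h
        have h2 : |tpos b - tpos x| = 1 := by
          rcases hb with hb | hb <;> rw [hb] <;> simp
        have h3 : |tpos x - tpos v| ≤ 1 + |tpos b - tpos v| := by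
          have := abs_sub_le (tpos x) (tpos b) (tpos v)
          rw [abs_sub_comm (tpos x) (tpos b)] at this
          omega
        have h4 : |tpos x - tpos v'| ≤ 1 + |tpos b - tpos v'| := by
          have := abs_sub_le (tpos x) (tpos b) (tpos v')
          rw [abs_sub_comm (tpos x) (tpos b)] at this
          omega
        rw [Walk.length_cons]
        push_cast
        rcases min_cases (|tpos b - tpos v| + |tpos v - tpos v'| + |tpos v' - tpos y|)
          (|tpos b - tpos v'| + |tpos v' - tpos v| + |tpos v - tpos y|) with ⟨hm, _⟩ | ⟨hm, _⟩ <;>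
          rw [hm] at ih' <;>
        [exact le_trans (min_le_left _ _) (by omega);
         exact le_trans (min_le_right _ _) (by omega)]

lemma walk_lamp_visit {x y : Wreath MZ L} (w : (WGr L).Walk x y) (z : ℤ)
    (hz : lamp x z ≠ lamp y z) : ∃ v ∈ w.support, tpos v = z := by
  induction w with
  | nil => exact absurd rfl hz
  | @cons x b y h p ih =>
    by_cases hb : lamp b z = lamp x z
    · obtain ⟨v, hv, rfl⟩ := ih (by rw [hb]; exact hz)
      exact ⟨v, by rw [Walk.support_cons, List.mem_cons]; exact Or.inr hv, rfl⟩
    · by_cases h1 : z = tpos x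
      · exact ⟨x, Walk.start_mem_support _, h1.symm⟩
      · by_cases h2 : z = tpos b
        · exact ⟨b, by
            rw [Walk.support_cons, List.mem_cons]
            exact Or.inr (Walk.start_mem_support p), h2.symm⟩
        · exact absurd (adj_lamp h z h1 h2) hb

lemma lenZ_le_wlen (g : Wreath MZ L) : lenZ g ≤ (wlen (swsw MZ L genZ) g : ℤ) := by
  obtain ⟨w, hw⟩ := (reach_one g).exists_walk_length_eq_dist
  have hP : ∃ v ∈ w.support, tpos v = Pm g := by
    rcases Pm_mem g with hm | hm | hm
    · exact ⟨1, Walk.start_mem_support _, by rw [tpos_one, hm]⟩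
    · exact ⟨g, Walk.end_mem_support _, hm.symm⟩
    · exact walk_lamp_visit w _ (by rw [lamp_one]; exact fun hc => hm hc.symm)
  have hQ : ∃ v ∈ w.support, tpos v = Qm g := by
    rcases Qm_mem g with hm | hm | hm
    · exact ⟨1, Walk.start_mem_support _, by rw [tpos_one, hm]⟩
    · exact ⟨g, Walk.end_mem_support _, hm.symm⟩
    · exact walk_lamp_visit w _ (by rw [lamp_one]; exact fun hc => hm hc.symm)
  have h2 := walk_visit2 w (Pm g) (Qm g) hP hQ
  have hP0 := Pm_nonneg g
  have hQ0 := Qm_nonpos g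
  have htP := tpos_le_Pm g
  have htQ := Qm_le_tpos g
  have e1 : |tpos (1 : Wreath MZ L) - Pm g| = Pm g := by
    rw [tpos_one]; rw [abs_sub_comm, sub_zero]; exact abs_of_nonneg hP0
  have e2 : |Pm g - Qm g| = Pm g - Qm g := abs_of_nonneg (by omega)
  have e3 : |Qm g - tpos g| = tpos g - Qm g := by
    rw [abs_sub_comm]; exact abs_of_nonneg (by omega)
  have e4 : |tpos (1 : Wreath MZ L) - Qm g| = -(Qm g) := by
    rw [tpos_one, abs_sub_comm, sub_zero]; exact abs_of_nonpos hQ0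
  have e5 : |Qm g - Pm g| = Pm g - Qm g := by
    rw [abs_sub_comm]; exact e2
  have e6 : |Pm g - tpos g| = Pm g - tpos g := abs_of_nonneg (by omega)
  rw [e1, e2, e3, e4, e5, e6] at h2
  have habs1 : -(tpos g) ≤ |tpos g| := neg_le_abs _
  have habs2 : tpos g ≤ |tpos g| := le_abs_self _
  have hlen : lenZ g ≤ (w.length : ℤ) := by
    unfold lenZ
    rcases min_cases (Pm g + (Pm g - Qm g) + (tpos g - Qm g))
      (-(Qm g) + (Pm g - Qm g) + (Pm g - tpos g)) with ⟨hm, _⟩ | ⟨hm, _⟩ <;>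
      rw [hm] at h2 <;> omega
  rw [hw] at hlen
  exact hlen

end LowerAux
section EscapeAux

open Multiplicative SimpleGraph

variable {L : Type*} [Group L]

noncomputable def EF0 (g : Wreath MZ L) : Finset ℤ := insert 0 (suppF g)

lemma EF0_nonempty (g : Wreath MZ L) : (EF0 g).Nonempty := ⟨0, by simp [EF0]⟩

noncomputable def M0 (g : Wreath MZ L) : ℤ := (EF0 g).max' (EF0_nonempty g)
noncomputable def m0 (g : Wreath MZ L) : ℤ := (EF0 g).min' (EF0_nonempty g)

lemma EF_eq_insert (g : Wreath MZ L) : EF g = insert (tpos g) (EF0 g) := by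
  unfold EF EF0
  rw [Finset.insert_comm]

lemma Pm_eq_max (g : Wreath MZ L) : Pm g = max (M0 g) (tpos g) := by
  unfold Pm M0
  rw [show (EF g).max' (EF_nonempty g) = (insert (tpos g) (EF0 g)).max'
      (by rw [← EF_eq_insert]; exact EF_nonempty g) by congr 1; exact EF_eq_insert g]
  rw [Finset.max'_insert]
  exact max_comm _ _

lemma Qm_eq_min (g : Wreath MZ L) : Qm g = min (m0 g) (tpos g) := by
  unfold Qm m0
  rw [show (EF g).min' (EF_nonempty g) = (insert (tpos g) (EF0 g)).min'
      (by rw [← EF_eq_insert]; exact EF_nonempty g) by congr 1; exact EF_eq_insert g]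
  rw [Finset.min'_insert]
  exact min_comm _ _

lemma M0_nonneg (g : Wreath MZ L) : 0 ≤ M0 g := Finset.le_max' _ 0 (by simp [EF0])

lemma m0_nonpos (g : Wreath MZ L) : m0 g ≤ 0 := Finset.min'_le _ 0 (by simp [EF0])

lemma M0_eq_of_lamp_eq {g h : Wreath MZ L} (he : ∀ z, lamp g z = lamp h z) :
    M0 g = M0 h ∧ m0 g = m0 h := by
  have : suppF g = suppF h := by
    ext z
    rw [mem_suppF, mem_suppF, he z]
  have h2 : EF0 g = EF0 h := by unfold EF0; rw [this]
  constructor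
  · unfold M0; congr 1
  · unfold m0; congr 1

lemma ray_ineq_right (Ma mi T k : ℤ) (hM : 0 ≤ Ma) (hm : mi ≤ 0) (h1 : mi ≤ T)
    (h2 : Ma ≤ |T|) (hk : 0 ≤ k) :
    2 * (max Ma T - min mi T) - |T| ≤ 2 * (max Ma (T+k) - min mi (T+k)) - |T+k| := by
  rcases abs_cases T with ⟨e1, f1⟩ | ⟨e1, f1⟩ <;>
    rcases abs_cases (T+k) with ⟨e2, f2⟩ | ⟨e2, f2⟩ <;>
    rcases max_cases Ma T with ⟨e3, f3⟩ | ⟨e3, f3⟩ <;>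
    rcases max_cases Ma (T+k) with ⟨e4, f4⟩ | ⟨e4, f4⟩ <;>
    rcases min_cases mi T with ⟨e5, f5⟩ | ⟨e5, f5⟩ <;>
    rcases min_cases mi (T+k) with ⟨e6, f6⟩ | ⟨e6, f6⟩ <;>
    rw [e1] at h2 <;> rw [e1, e2, e3, e4, e5, e6] <;> omega

lemma ray_ineq_left (Ma mi T k : ℤ) (hM : 0 ≤ Ma) (hm : mi ≤ 0) (h1 : T ≤ Ma)
    (h2 : -mi ≤ |T|) (hk : 0 ≤ k) :
    2 * (max Ma T - min mi T) - |T| ≤ 2 * (max Ma (T-k) - min mi (T-k)) - |T-k| := by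
  rcases abs_cases T with ⟨e1, f1⟩ | ⟨e1, f1⟩ <;>
    rcases abs_cases (T-k) with ⟨e2, f2⟩ | ⟨e2, f2⟩ <;>
    rcases max_cases Ma T with ⟨e3, f3⟩ | ⟨e3, f3⟩ <;>
    rcases max_cases Ma (T-k) with ⟨e4, f4⟩ | ⟨e4, f4⟩ <;>
    rcases min_cases mi T with ⟨e5, f5⟩ | ⟨e5, f5⟩ <;>
    rcases min_cases mi (T-k) with ⟨e6, f6⟩ | ⟨e6, f6⟩ <;>
    rw [e1] at h2 <;> rw [e1, e2, e3, e4, e5, e6] <;> omega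

/-- the ray elements: same lamps, shifted walker -/
noncomputable def rayElt (g : Wreath MZ L) (u : ℤ) : Wreath MZ L :=
  ⟨g.left, Multiplicative.ofAdd u⟩

lemma tpos_rayElt (g : Wreath MZ L) (u : ℤ) : tpos (rayElt g u) = u := rfl

lemma lamp_rayElt (g : Wreath MZ L) (u : ℤ) (z : ℤ) : lamp (rayElt g u) z = lamp g z := rfl

lemma rayElt_tpos_self (g : Wreath MZ L) : rayElt g (tpos g) = g := by
  apply wg_ext
  · rfl
  · intro z; rfl

lemma lenZ_rayElt (g : Wreath MZ L) (u : ℤ) :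
    lenZ (rayElt g u) = 2 * (max (M0 g) u - min (m0 g) u) - |u| := by
  obtain ⟨hM, hm⟩ := M0_eq_of_lamp_eq (fun z => (lamp_rayElt g u z).symm)
  unfold lenZ
  rw [Pm_eq_max, Qm_eq_min, tpos_rayElt, ← hM, ← hm]

lemma rayElt_adj (g : Wreath MZ L) (u : ℤ) (ε : ℤ) (hε : ε = 1 ∨ ε = -1) :
    (WGr L).Adj (rayElt g u) (rayElt g (u + ε)) := by
  apply adj_construct ε hε
  · rw [tpos_rayElt, tpos_rayElt]
  · intro z _ _
    rw [lamp_rayElt, lamp_rayElt]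

/-- an escaping element lies in the infinite part -/
lemma escape_infinite {g : Wreath MZ L} {n : ℕ} (hw : wlen (swsw MZ L genZ) g = n)
    (hub : (n : ℤ) ≤ lenZ g)
    (hesc : (m0 g ≤ tpos g ∧ M0 g ≤ |tpos g|) ∨ (tpos g ≤ M0 g ∧ -(m0 g) ≤ |tpos g|)) :
    g ∈ infPart (swsw MZ L genZ) {x | n ≤ wlen (swsw MZ L genZ) x} := by
  classical
  set A : Set (Wreath MZ L) := {x | n ≤ wlen (swsw MZ L genZ) x} with hA
  have hgA : g ∈ A := by rw [hA]; exact le_of_eq hw.symm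
  -- direction of escape
  have hgZ : lenZ g = 2 * (max (M0 g) (tpos g) - min (m0 g) (tpos g)) - |tpos g| := by
    unfold lenZ; rw [Pm_eq_max, Qm_eq_min]
  obtain ⟨σ, hσ, hray⟩ : ∃ σ : ℤ, (σ = 1 ∨ σ = -1) ∧
      ∀ k : ℕ, (n : ℤ) ≤ lenZ (rayElt g (tpos g + σ * k)) := by
    rcases hesc with ⟨h1, h2⟩ | ⟨h1, h2⟩
    · refine ⟨1, Or.inl rfl, fun k => ?_⟩
      rw [lenZ_rayElt, show tpos g + 1 * (k:ℤ) = tpos g + k by ring]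
      calc (n : ℤ) ≤ lenZ g := hub
        _ ≤ _ := by
          rw [hgZ]
          exact ray_ineq_right (M0 g) (m0 g) (tpos g) k (M0_nonneg g) (m0_nonpos g) h1 h2
            (Int.ofNat_nonneg k)
    · refine ⟨-1, Or.inr rfl, fun k => ?_⟩
      rw [lenZ_rayElt, show tpos g + -1 * (k:ℤ) = tpos g - k by ring]
      calc (n : ℤ) ≤ lenZ g := hub
        _ ≤ _ := by
          rw [hgZ]
          exact ray_ineq_left (M0 g) (m0 g) (tpos g) k (M0_nonneg g) (m0_nonpos g) h1 h2
            (Int.ofNat_nonneg k)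
  -- the ray lies in A
  have hmem : ∀ k : ℕ, rayElt g (tpos g + σ * k) ∈ A := by
    intro k
    rw [hA]
    have h1 := hray k
    have h2 := lenZ_le_wlen (rayElt g (tpos g + σ * k))
    simp only [Set.mem_setOf_eq]
    exact_mod_cast le_trans h1 h2
  have hmem0 : rayElt g (tpos g + σ * ((0:ℕ):ℤ)) = g := by
    norm_num
    exact rayElt_tpos_self g
  refine ⟨hgA, ?_⟩
  -- reachability along the ray
  have hreach : ∀ k : ℕ, ((cayley (Wreath MZ L) (swsw MZ L genZ)).induce A).Reachable
      ⟨g, hgA⟩ ⟨rayElt g (tpos g + σ * k), hmem k⟩ := by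
    intro k
    induction k with
    | zero =>
      have heq : (⟨rayElt g (tpos g + σ * ((0:ℕ):ℤ)), hmem 0⟩ : ↥A) = ⟨g, hgA⟩ :=
        Subtype.ext hmem0
      rw [heq]
    | succ k ih =>
      refine ih.trans (SimpleGraph.Adj.reachable ?_)
      show ((cayley (Wreath MZ L) (swsw MZ L genZ)).induce A).Adj _ _
      rw [SimpleGraph.comap_adj]
      simp only [Function.Embedding.coe_subtype]
      have harg : tpos g + σ * ((k+1:ℕ):ℤ) = (tpos g + σ * (k:ℤ)) + σ := by push_cast; ring
      rw [harg]
      exact rayElt_adj g _ σ hσ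
  -- infinitude
  refine Set.infinite_of_injective_forall_mem
    (f := fun k : ℕ => (⟨rayElt g (tpos g + σ * k), hmem k⟩ : ↥A)) ?_ ?_
  · intro a b hab
    have h1 := congrArg (fun x : ↥A => tpos x.val) hab
    simp only [tpos_rayElt] at h1
    have : (a : ℤ) = b := by
      rcases hσ with rfl | rfl <;> omega
    exact_mod_cast this
  · intro k
    exact hreach k

end EscapeAux
section TrappedAux

open Multiplicative SimpleGraph

variable {L : Type*} [Group L]

lemma le_M0_of_lamp {g : Wreath MZ L} {z : ℤ} (h : lamp g z ≠ 1) : z ≤ M0 g :=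
  Finset.le_max' _ _ (by simp [EF0, mem_suppF, h])

lemma m0_le_of_lamp {g : Wreath MZ L} {z : ℤ} (h : lamp g z ≠ 1) : m0 g ≤ z :=
  Finset.min'_le _ _ (by simp [EF0, mem_suppF, h])

lemma M0_mem (g : Wreath MZ L) : M0 g = 0 ∨ lamp g (M0 g) ≠ 1 := by
  have := Finset.max'_mem (EF0 g) (EF0_nonempty g)
  simp only [EF0, Finset.mem_insert, mem_suppF] at this
  exact this

lemma m0_mem (g : Wreath MZ L) : m0 g = 0 ∨ lamp g (m0 g) ≠ 1 := by
  have := Finset.min'_mem (EF0 g) (EF0_nonempty g)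
  simp only [EF0, Finset.mem_insert, mem_suppF] at this
  exact this

lemma wlen_eq_lenZ {g : Wreath MZ L} (h : ¬ exceptionalP g) :
    (wlen (swsw MZ L genZ) g : ℤ) = lenZ g := by
  have h1 := lenZ_le_wlen g
  have h2 := wlen_le_lenT g
  rw [lenT_nonexc h] at h2
  have := lenZ_nonneg g
  omega

lemma wlen_exc_ge_two {g : Wreath MZ L} (hexc : exceptionalP g) :
    2 ≤ wlen (swsw MZ L genZ) g := by
  have hne : wlen (swsw MZ L genZ) g ≠ 0 := by
    intro hc
    have := (reach_one g).dist_eq_zero_iff.mp hc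
    exact hexc.1 this.symm
  have hne1 : wlen (swsw MZ L genZ) g ≠ 1 := by
    intro hc
    have hadj : (WGr L).Adj 1 g := SimpleGraph.dist_eq_one_iff_adj.mp hc
    have := adj_tpos hadj
    rw [tpos_one, hexc.2.1] at this
    omega
  omega

/-- walk invariance in the induced graph -/
lemma induced_walk_inv {A : Set (Wreath MZ L)} (P : Wreath MZ L → Prop)
    (hstep : ∀ x y : Wreath MZ L, P x → (WGr L).Adj x y → y ∈ A → P y) :
    ∀ (x y : ↥A) (_ : ((cayley (Wreath MZ L) (swsw MZ L genZ)).induce A).Walk x y),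
      P x.val → P y.val := by
  intro x y w
  induction w with
  | nil => exact id
  | @cons x b y h p ih =>
    intro hx
    refine ih ?_
    have hadj : (WGr L).Adj x.val b.val := h
    exact hstep x.val b.val hx hadj b.2

lemma boxSet_finite [Finite L] (a b c : ℤ) :
    Set.Finite {x : Wreath MZ L |
      (∀ z, lamp x z ≠ 1 → z ∈ Finset.Icc a b) ∧ tpos x ∈ Finset.Icc (-c) c} := by
  rw [← Set.finite_coe_iff]
  refine Finite.of_injective (β := (↥(Finset.Icc a b) → L) × ↥(Finset.Icc (-c) c))
    (fun x => (fun i => lamp x.val i, ⟨tpos x.val, x.2.2⟩)) ?_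
  intro x y hxy
  rw [Prod.ext_iff] at hxy
  obtain ⟨h1, h2⟩ := hxy
  have ht : tpos x.val = tpos y.val := congrArg Subtype.val h2
  apply Subtype.ext
  apply wg_ext ht
  intro z
  by_cases hz : z ∈ Finset.Icc a b
  · exact congrFun h1 ⟨z, hz⟩
  · have hx1 : lamp x.val z = 1 := by
      by_contra hc
      exact hz (x.2.1 z hc)
    have hy1 : lamp y.val z = 1 := by
      by_contra hc
      exact hz (y.2.1 z hc)
    rw [hx1, hy1]

/-- a trapped element is not in the infinite part -/
lemma trapped_not_inf [Finite L] {g : Wreath MZ L} {n : ℕ}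
    (hw : wlen (swsw MZ L genZ) g = n)
    (ht1 : |tpos g| < M0 g) (ht2 : |tpos g| < -(m0 g)) :
    g ∉ infPart (swsw MZ L genZ) {x | n ≤ wlen (swsw MZ L genZ) x} := by
  classical
  set A : Set (Wreath MZ L) := {x | n ≤ wlen (swsw MZ L genZ) x} with hA
  rintro ⟨hg, hinf⟩
  have habs := abs_nonneg (tpos g)
  have hM := M0_nonneg g
  have hm := m0_nonpos g
  have habs1 := le_abs_self (tpos g)
  have habs2 := neg_abs_le (tpos g)
  have hexcg : ¬ exceptionalP g := fun hc => by
    rw [hc.2.1] at ht1 ht2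
    simp only [abs_zero] at ht1 ht2
    have h1 : Pm g = max (M0 g) (tpos g) := Pm_eq_max g
    rw [hc.2.2.1, hc.2.1] at h1
    have : M0 g ≤ max (M0 g) 0 := le_max_left _ _
    omega
  have hn : (n : ℤ) = lenZ g := by rw [← hw]; exact wlen_eq_lenZ hexcg
  have hlampP : lamp g (M0 g) ≠ 1 := by
    rcases M0_mem g with hc | hc
    · omega
    · exact hc
  have hlampQ : lamp g (m0 g) ≠ 1 := by
    rcases m0_mem g with hc | hc
    · omega
    · exact hc
  have hlenZg : lenZ g = 2 * (M0 g - m0 g) - |tpos g| := by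
    unfold lenZ
    rw [Pm_eq_max, Qm_eq_min, max_eq_left (by omega : tpos g ≤ M0 g),
      min_eq_left (by omega : m0 g ≤ tpos g)]
  -- the invariant
  set Inv : Wreath MZ L → Prop := fun x =>
    (∀ z, lamp x z ≠ 1 → z ∈ Finset.Icc (m0 g) (M0 g)) ∧
    lamp x (M0 g) = lamp g (M0 g) ∧ lamp x (m0 g) = lamp g (m0 g) ∧
    tpos x ∈ Finset.Icc (-|tpos g|) (|tpos g|) with hInv
  have hInvg : Inv g := by
    refine ⟨fun z hz => ?_, rfl, rfl, ?_⟩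
    · rw [Finset.mem_Icc]
      exact ⟨m0_le_of_lamp hz, le_M0_of_lamp hz⟩
    · rw [Finset.mem_Icc]
      exact ⟨habs2, habs1⟩
  -- the step lemma
  have hstep : ∀ x y : Wreath MZ L, Inv x → (WGr L).Adj x y → y ∈ A → Inv y := by
    intro x y hx hadj hyA
    obtain ⟨hs, hP, hQ, htx⟩ := hx
    rw [Finset.mem_Icc] at htx
    have hty := adj_tpos hadj
    have hty' : |tpos y| ≤ |tpos g| + 1 := by
      rcases hty with h | h <;> rw [h] <;> rcases abs_cases (tpos x) with ⟨e, f⟩ | ⟨e, f⟩ <;>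
        rcases abs_cases (tpos x + 1) with ⟨e2, f2⟩ | ⟨e2, f2⟩ <;>
        rcases abs_cases (tpos x - 1) with ⟨e3, f3⟩ | ⟨e3, f3⟩ <;> omega
    have hchange : ∀ z, z ≠ tpos x → z ≠ tpos y → lamp y z = lamp x z :=
      fun z h1 h2 => adj_lamp hadj z h1 h2
    have hsy : ∀ z, lamp y z ≠ 1 → z ∈ Finset.Icc (m0 g) (M0 g) := by
      intro z hz
      rw [Finset.mem_Icc]
      by_cases h1 : z = tpos x
      · subst h1; omega
      · by_cases h2 : z = tpos y
        · subst h2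
          rcases abs_cases (tpos y) with ⟨e, f⟩ | ⟨e, f⟩ <;> omega
        · rw [hchange z h1 h2] at hz
          have := hs z hz
          rw [Finset.mem_Icc] at this
          exact this
    by_cases hcase : |tpos y| ≤ |tpos g|
    · -- invariant is preserved
      have hxne : M0 g ≠ tpos x := by omega
      have hyne : M0 g ≠ tpos y := by
        rcases abs_cases (tpos y) with ⟨e, _⟩ | ⟨e, _⟩ <;> omega
      have hxne' : m0 g ≠ tpos x := by omega
      have hyne' : m0 g ≠ tpos y := by
        rcases abs_cases (tpos y) with ⟨e, _⟩ | ⟨e, _⟩ <;> omega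
      refine ⟨hsy, ?_, ?_, ?_⟩
      · rw [hchange (M0 g) hxne hyne, hP]
      · rw [hchange (m0 g) hxne' hyne', hQ]
      · rw [Finset.mem_Icc]
        rcases abs_cases (tpos y) with ⟨e, f⟩ | ⟨e, f⟩ <;> omega
    · -- |tpos y| = |tpos g| + 1 : contradiction with y ∈ A
      exfalso
      have hcase' : |tpos y| = |tpos g| + 1 := by omega
      have hyexc : ¬ exceptionalP y := by
        intro hc
        rw [hc.2.1] at hcase'
        simp only [abs_zero] at hcase'
        omega
      have hwy : (n : ℤ) ≤ lenZ y := by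
        have h1 := wlen_eq_lenZ hyexc
        have hyA' : n ≤ wlen (swsw MZ L genZ) y := hyA
        omega
      have hPmy : Pm y ≤ M0 g := by
        refine Pm_le (by omega) (by rcases abs_cases (tpos y) with ⟨e, _⟩ | ⟨e, _⟩ <;> omega) ?_
        intro z hz
        by_contra hc
        have := hsy z hc
        rw [Finset.mem_Icc] at this
        omega
      have hQmy : m0 g ≤ Qm y := by
        refine le_Qm (by omega) (by rcases abs_cases (tpos y) with ⟨e, _⟩ | ⟨e, _⟩ <;> omega) ?_
        intro z hz
        by_contra hc
        have := hsy z hc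
        rw [Finset.mem_Icc] at this
        omega
      have hly : lenZ y = 2 * (Pm y - Qm y) - |tpos y| := rfl
      omega
  -- all reachable points satisfy the invariant, so the reachable set is finite
  have hsub : {w : ↥A | ((cayley (Wreath MZ L) (swsw MZ L genZ)).induce A).Reachable ⟨g, hg⟩ w}
      ⊆ Subtype.val ⁻¹' {x : Wreath MZ L |
        (∀ z, lamp x z ≠ 1 → z ∈ Finset.Icc (m0 g) (M0 g)) ∧
          tpos x ∈ Finset.Icc (-|tpos g|) (|tpos g|)} := by
    intro w hw'
    obtain ⟨p⟩ := hw'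
    have := induced_walk_inv Inv hstep ⟨g, hg⟩ w p hInvg
    exact ⟨this.1, this.2.2.2⟩
  have hfin : Set.Finite (Subtype.val ⁻¹' {x : Wreath MZ L |
      (∀ z, lamp x z ≠ 1 → z ∈ Finset.Icc (m0 g) (M0 g)) ∧
        tpos x ∈ Finset.Icc (-|tpos g|) (|tpos g|)} : Set ↥A) :=
    Set.Finite.preimage Subtype.val_injective.injOn (boxSet_finite (m0 g) (M0 g) (|tpos g|))
  exact hinf (hfin.subset hsub)

/-- an exceptional element is not in the infinite part -/
lemma exc_not_inf {g : Wreath MZ L} {n : ℕ}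
    (hw : wlen (swsw MZ L genZ) g = n) (hexc : exceptionalP g) :
    g ∉ infPart (swsw MZ L genZ) {x | n ≤ wlen (swsw MZ L genZ) x} := by
  classical
  set A : Set (Wreath MZ L) := {x | n ≤ wlen (swsw MZ L genZ) x} with hA
  rintro ⟨hg, hinf⟩
  have hn2 : 2 ≤ n := hw ▸ wlen_exc_ge_two hexc
  have hnbr : ∀ y : Wreath MZ L, (WGr L).Adj g y → ¬ (n ≤ wlen (swsw MZ L genZ) y) := by
    intro y hadj
    have hty := adj_tpos hadj
    rw [hexc.2.1] at hty
    have hyexc : ¬ exceptionalP y := by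
      intro hc
      rw [hc.2.1] at hty
      omega
    have hchange := adj_lamp hadj
    rw [hexc.2.1] at hchange
    have hlampy : ∀ z, z ≠ 0 → z ≠ tpos y → lamp y z = 1 := by
      intro z h1 h2
      rw [hchange z h1 h2]
      rcases lt_trichotomy z 0 with h | h | h
      · exact lamp_eq_one_of_lt (by rw [hexc.2.2.2]; exact h)
      · exact absurd h h1
      · exact lamp_eq_one_of_gt (by rw [hexc.2.2.1]; exact h)
    have htyabs : |tpos y| = 1 := by rcases hty with h | h <;> rw [h] <;> simp
    have hbnd : Pm y - Qm y ≤ 1 := by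
      rcases hty with h | h
      · have h1 : Pm y ≤ 1 := Pm_le (by omega) (by omega)
          (fun z hz => hlampy z (by omega) (by omega))
        have h2 : (0:ℤ) ≤ Qm y := le_Qm (by omega) (by omega)
          (fun z hz => hlampy z (by omega) (by omega))
        omega
      · have h1 : Pm y ≤ 0 := Pm_le (by omega) (by omega)
          (fun z hz => hlampy z (by omega) (by omega))
        have h2 : (-1:ℤ) ≤ Qm y := le_Qm (by omega) (by omega)
          (fun z hz => hlampy z (by omega) (by omega))
        omega
    have hlen : lenZ y ≤ 1 := by
      have hly : lenZ y = 2 * (Pm y - Qm y) - |tpos y| := rfl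
      omega
    have h1 := wlen_eq_lenZ hyexc
    omega
  have hsub : {w : ↥A | ((cayley (Wreath MZ L) (swsw MZ L genZ)).induce A).Reachable ⟨g, hg⟩ w}
      ⊆ {(⟨g, hg⟩ : ↥A)} := by
    intro w hw'
    obtain ⟨p⟩ := hw'
    cases p with
    | nil => rfl
    | @cons x b y h q =>
      exfalso
      have hadj : (WGr L).Adj g b.val := h
      exact hnbr b.val hadj b.2
  exact hinf ((Set.finite_singleton _).subset hsub)

/-- classification of sphere elements not connected to infinity -/
lemma not_inf_classify [Finite L] {g : Wreath MZ L} {n : ℕ}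
    (hw : wlen (swsw MZ L genZ) g = n)
    (hnin : g ∉ infPart (swsw MZ L genZ) {x | n ≤ wlen (swsw MZ L genZ) x}) :
    exceptionalP g ∨
      ((n : ℤ) = lenZ g ∧ |tpos g| < M0 g ∧ |tpos g| < -(m0 g)) := by
  by_cases hexc : exceptionalP g
  · exact Or.inl hexc
  · right
    have hn : (n : ℤ) = lenZ g := by rw [← hw]; exact wlen_eq_lenZ hexc
    refine ⟨hn, ?_⟩
    by_contra hc
    rw [not_and_or] at hc
    have hM := M0_nonneg g
    have hm := m0_nonpos g
    have habs1 := le_abs_self (tpos g)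
    have habs2 := neg_abs_le (tpos g)
    have hesc : (m0 g ≤ tpos g ∧ M0 g ≤ |tpos g|) ∨ (tpos g ≤ M0 g ∧ -(m0 g) ≤ |tpos g|) := by
      rcases hc with h | h
      · push_neg at h
        rcases le_or_gt (m0 g) (tpos g) with h2 | h2
        · exact Or.inl ⟨h2, h⟩
        · exact Or.inr ⟨by omega, by omega⟩
      · push_neg at h
        rcases le_or_gt (tpos g) (M0 g) with h2 | h2
        · exact Or.inr ⟨h2, h⟩
        · exact Or.inl ⟨by omega, by omega⟩
    exact hnin (escape_infinite hw (le_of_eq hn) hesc)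

end TrappedAux
section CountAux

open Multiplicative

variable {L : Type*} [Group L]

/-- constructor from a finitely supported `ℤ`-indexed family -/
noncomputable def mkW (f : ℤ → L) (hf : (Function.mulSupport f).Finite) (t : ℤ) :
    Wreath MZ L :=
  ⟨⟨fun x => f (Multiplicative.toAdd x), by
    show (Function.mulSupport fun x : MZ => f (Multiplicative.toAdd x)).Finite
    have : (Function.mulSupport fun x : MZ => f (Multiplicative.toAdd x)) ⊆
        Multiplicative.ofAdd '' Function.mulSupport f := fun x hx => ⟨Multiplicative.toAdd x, hx, rfl⟩
    exact (hf.image _).subset this⟩, Multiplicative.ofAdd t⟩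

lemma tpos_mkW (f : ℤ → L) (hf) (t : ℤ) : tpos (mkW f hf t) = t := rfl

lemma lamp_mkW (f : ℤ → L) (hf) (t z : ℤ) : lamp (mkW f hf t) z = f z := rfl

lemma wlen_box {g : Wreath MZ L} {n : ℕ} (h : wlen (swsw MZ L genZ) g ≤ n) :
    (∀ z, lamp g z ≠ 1 → z ∈ Finset.Icc (-(n:ℤ)) n) ∧ tpos g ∈ Finset.Icc (-(n:ℤ)) n := by
  have h1 := lenZ_le_wlen g
  have habs := abs_tpos_le g
  have hP := Pm_nonneg g
  have hQ := Qm_nonpos g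
  have habs0 := abs_nonneg (tpos g)
  have habs1 := le_abs_self (tpos g)
  have habs2 := neg_abs_le (tpos g)
  have hlg : lenZ g = 2 * (Pm g - Qm g) - |tpos g| := rfl
  have hcast : (wlen (swsw MZ L genZ) g : ℤ) ≤ n := by exact_mod_cast h
  refine ⟨fun z hz => ?_, ?_⟩
  · have hz1 := le_Pm_of_lamp hz
    have hz2 := Qm_le_of_lamp hz
    rw [Finset.mem_Icc]
    omega
  · rw [Finset.mem_Icc]
    have := tpos_le_Pm g
    have := Qm_le_tpos g
    omega

lemma sphere_finite [Finite L] (n : ℕ) : (wSphere (swsw MZ L genZ) n).Finite :=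
  (boxSet_finite (-(n:ℤ)) n n).subset (fun g hg => wlen_box (le_of_eq hg))

/-- the reference point `(1, n)` on the sphere -/
noncomputable def basePt (n : ℕ) : Wreath MZ L :=
  mkW (fun _ => (1 : L)) (by simp) n

lemma lamp_basePt (n : ℕ) (z : ℤ) : lamp (basePt (L := L) n) z = 1 := rfl

lemma tpos_basePt (n : ℕ) : tpos (basePt (L := L) n) = n := rfl

lemma M0_basePt (n : ℕ) : M0 (basePt (L := L) n) = 0 := by
  refine le_antisymm (Finset.max'_le _ _ _ ?_) (M0_nonneg _)
  intro z hz
  simp only [EF0, Finset.mem_insert, mem_suppF, lamp_basePt] at hz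
  rcases hz with rfl | hz
  · rfl
  · exact absurd rfl hz

lemma m0_basePt (n : ℕ) : m0 (basePt (L := L) n) = 0 := by
  refine le_antisymm (m0_nonpos _) (Finset.le_min' _ _ _ ?_)
  intro z hz
  simp only [EF0, Finset.mem_insert, mem_suppF, lamp_basePt] at hz
  rcases hz with rfl | hz
  · rfl
  · exact absurd rfl hz

lemma basePt_not_exc (n : ℕ) : ¬ exceptionalP (basePt (L := L) n) := by
  intro h
  exact h.1 (eq_one_of_coords h.2.1 h.2.2.1 h.2.2.2 (lamp_basePt n 0))

lemma lenZ_basePt (n : ℕ) : lenZ (basePt (L := L) n) = n := by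
  have h : lenZ (basePt (L := L) n) = 2 * (Pm (basePt (L := L) n) - Qm (basePt (L := L) n))
      - |tpos (basePt (L := L) n)| := rfl
  rw [h, Pm_eq_max, Qm_eq_min, M0_basePt, m0_basePt, tpos_basePt]
  rw [max_eq_right (by positivity : (0:ℤ) ≤ n), min_eq_left (by positivity : (0:ℤ) ≤ n),
    abs_of_nonneg (by positivity : (0:ℤ) ≤ n)]
  ring

lemma wlen_basePt (n : ℕ) : wlen (swsw MZ L genZ) (basePt (L := L) n) = n := by
  have := wlen_eq_lenZ (basePt_not_exc (L := L) n)
  rw [lenZ_basePt] at this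
  exact_mod_cast this

lemma basePt_mem_sphere (n : ℕ) : basePt (L := L) n ∈ wSphere (swsw MZ L genZ) n :=
  wlen_basePt n

lemma basePt_mem_inf (n : ℕ) : basePt (L := L) n ∈ sphereInf (swsw MZ L genZ) n 0 := by
  constructor
  · exact ⟨le_of_eq (wlen_basePt n).symm, by rw [wlen_basePt]; omega⟩
  · refine escape_infinite (wlen_basePt n) (by rw [lenZ_basePt]) ?_
    refine Or.inl ⟨?_, ?_⟩
    · rw [m0_basePt, tpos_basePt]; positivity
    · rw [M0_basePt]; positivity

/-- the trapped set -/
def TrapSet (L : Type*) [Group L] (n : ℕ) : Set (Wreath MZ L) :=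
  {g | (n:ℤ) = lenZ g ∧ |tpos g| < M0 g ∧ |tpos g| < -(m0 g)}

/-- the exceptional part of the sphere -/
def ExcSet (L : Type*) [Group L] (n : ℕ) : Set (Wreath MZ L) :=
  {g | exceptionalP g ∧ wlen (swsw MZ L genZ) g = n}

lemma D_subset [Finite L] (n : ℕ) :
    wSphere (swsw MZ L genZ) n \ sphereInf (swsw MZ L genZ) n 0 ⊆
      TrapSet L n ∪ ExcSet L n := by
  rintro g ⟨hg1, hg2⟩
  have hann : g ∈ wAnnulus (swsw MZ L genZ) n 0 := ⟨le_of_eq hg1.symm, by rw [hg1]; omega⟩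
  have hnin : g ∉ infPart (swsw MZ L genZ) {x | n ≤ wlen (swsw MZ L genZ) x} := by
    intro hc
    exact hg2 ⟨hann, hc⟩
  rcases not_inf_classify hg1 hnin with h | h
  · exact Or.inr ⟨h, hg1⟩
  · exact Or.inl h

lemma exc_card [Finite L] (n : ℕ) : Nat.card ↥(ExcSet L n) ≤ Nat.card L := by
  refine Nat.card_le_card_of_injective (fun g => lamp g.val 0) ?_
  intro g h hgh
  apply Subtype.ext
  have hg := g.2.1
  have hh := h.2.1
  apply wg_ext (by rw [hg.2.1, hh.2.1])
  intro z
  rcases lt_trichotomy z 0 with h0 | rfl | h0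
  · rw [lamp_eq_one_of_lt (by rw [hg.2.2.2]; exact h0),
      lamp_eq_one_of_lt (by rw [hh.2.2.2]; exact h0)]
  · exact hgh
  · rw [lamp_eq_one_of_gt (by rw [hg.2.2.1]; exact h0),
      lamp_eq_one_of_gt (by rw [hh.2.2.1]; exact h0)]

lemma trapset_facts {g : Wreath MZ L} {n : ℕ} (hg : g ∈ TrapSet L n) :
    (n:ℤ) = 2 * (M0 g - m0 g) - |tpos g| ∧ 3 * (M0 g - m0 g) ≤ 2 * (n:ℤ) - 2 ∧
      |tpos g| ≤ (n:ℤ) ∧ -(n:ℤ) ≤ m0 g := by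
  obtain ⟨h1, h2, h3⟩ := hg
  have habs0 := abs_nonneg (tpos g)
  have habs1 := le_abs_self (tpos g)
  have habs2 := neg_abs_le (tpos g)
  have hM := M0_nonneg g
  have hm := m0_nonpos g
  have hlg : lenZ g = 2 * (Pm g - Qm g) - |tpos g| := rfl
  have hPm : Pm g = M0 g := by
    rw [Pm_eq_max]
    exact max_eq_left (by omega)
  have hQm : Qm g = m0 g := by
    rw [Qm_eq_min]
    exact min_eq_left (by omega)
  rw [hlg, hPm, hQm] at h1
  refine ⟨h1, by omega, by omega, by omega⟩

lemma trap_card [Finite L] (n : ℕ) :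
    Nat.card ↥(TrapSet L n) ≤
      (2*n+1) * ((2*n+1) * Nat.card L ^ ((2*n)/3 + 1)) := by
  classical
  set W : ℕ := (2*n)/3 with hW
  have hWd : 3 * W + 2 ≥ 2 * n := by omega
  have key : ∀ g ∈ TrapSet L n, M0 g - m0 g ≤ (W:ℤ) := by
    intro g hg
    obtain ⟨-, h2, -, -⟩ := trapset_facts hg
    have : (3:ℤ) * W + 2 ≥ 2 * n := by exact_mod_cast hWd
    omega
  have hinj : Function.Injective (fun g : ↥(TrapSet L n) =>
      ((⟨tpos g.val, by
          obtain ⟨-, -, h3, -⟩ := trapset_facts g.2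
          rw [Finset.mem_Icc]
          have := le_abs_self (tpos g.val)
          have := neg_abs_le (tpos g.val)
          omega⟩ : ↥(Finset.Icc (-(n:ℤ)) n)),
       (⟨m0 g.val, by
          obtain ⟨-, -, -, h4⟩ := trapset_facts g.2
          rw [Finset.mem_Icc]
          have := m0_nonpos g.val
          omega⟩ : ↥(Finset.Icc (-(n:ℤ)) n)),
       fun i : Fin (W+1) => lamp g.val (m0 g.val + i))) := by
    intro g h hgh
    simp only [Prod.mk.injEq, Subtype.mk.injEq] at hgh
    obtain ⟨ht, hm, hl⟩ := hgh
    apply Subtype.ext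
    apply wg_ext ht
    intro z
    have hMg := key g.val g.2
    have hMh := key h.val h.2
    rcases lt_or_ge z (m0 g.val) with h0 | h0
    · have e1 : lamp g.val z = 1 := by
        by_contra hc
        exact absurd (m0_le_of_lamp hc) (by omega)
      have e2 : lamp h.val z = 1 := by
        by_contra hc
        have := m0_le_of_lamp hc
        omega
      rw [e1, e2]
    · by_cases hz : z ≤ m0 g.val + W
      · have hi : (z - m0 g.val).toNat < W + 1 := by omega
        have hthis := congrFun hl ⟨(z - m0 g.val).toNat, hi⟩
        simp only at hthis
        have harg : m0 g.val + ((z - m0 g.val).toNat : ℤ) = z := by omega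
        have harg2 : m0 h.val + ((z - m0 g.val).toNat : ℤ) = z := by omega
        rw [harg, harg2] at hthis
        exact hthis
      · have e1 : lamp g.val z = 1 := by
          by_contra hc
          exact absurd (le_M0_of_lamp hc) (by omega)
        have e2 : lamp h.val z = 1 := by
          by_contra hc
          have := le_M0_of_lamp hc
          omega
        rw [e1, e2]
  have hcard := Nat.card_le_card_of_injective _ hinj
  have e1 : Nat.card (↥(Finset.Icc (-(n:ℤ)) n) × ↥(Finset.Icc (-(n:ℤ)) n) × (Fin (W+1) → L))
      = (2*n+1) * ((2*n+1) * Nat.card L ^ (W+1)) := by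
    rw [Nat.card_prod, Nat.card_prod, Nat.card_fun]
    have hIcc : Nat.card ↥(Finset.Icc (-(n:ℤ)) n) = 2*n+1 := by
      rw [Nat.card_eq_finsetCard, Int.card_Icc]
      omega
    have hFin : Nat.card (Fin (W+1)) = W+1 := by
      rw [Nat.card_eq_fintype_card, Fintype.card_fin]
    rw [hIcc, hFin]
  rw [e1] at hcard
  exact hcard

end CountAux
section FinalAux

open Multiplicative

variable {L : Type*} [Group L]

lemma sphere_card_ge [Finite L] (n : ℕ) (hn : 1 ≤ n) :
    Nat.card L ^ (n+1) ≤ Nat.card ↥(wSphere (swsw MZ L genZ) n) := by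
  classical
  haveI := (sphere_finite (L := L) n).to_subtype
  have hval : ∀ f : Fin (n+1) → L, ∃ g : Wreath MZ L,
      wlen (swsw MZ L genZ) g = n ∧ tpos g = n ∧
        (∀ i : Fin (n+1), lamp g (i : ℤ) = f i) ∧
        (∀ z : ℤ, ¬ (0 ≤ z ∧ z ≤ n) → lamp g z = 1) := by
    intro f
    set fL : ℤ → L := fun z => if h : 0 ≤ z ∧ z ≤ (n:ℤ) then f ⟨z.toNat, by omega⟩ else 1
      with hfL
    have hfin : (Function.mulSupport fL).Finite := by
      refine (Finset.Icc (0:ℤ) n).finite_toSet.subset ?_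
      intro z hz
      rw [Function.mem_mulSupport, hfL] at hz
      by_cases h : 0 ≤ z ∧ z ≤ (n:ℤ)
      · simpa using h
      · exact absurd (dif_neg h) hz
    refine ⟨mkW fL hfin n, ?_, rfl, ?_, ?_⟩
    · -- word length
      have hPm : Pm (mkW fL hfin n) = n := by
        apply le_antisymm
        · refine Pm_le (by positivity) (le_of_eq (tpos_mkW _ _ _)) ?_
          intro z hz
          rw [lamp_mkW, hfL]
          exact dif_neg (by omega)
        · exact le_of_eq (tpos_mkW _ _ _).symm |>.trans (tpos_le_Pm _)
      have hQm : Qm (mkW fL hfin n) = 0 := by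
        apply le_antisymm (Qm_nonpos _)
        refine le_Qm le_rfl (by rw [tpos_mkW]; positivity) ?_
        intro z hz
        rw [lamp_mkW, hfL]
        exact dif_neg (by omega)
      have hexc : ¬ exceptionalP (mkW fL hfin n) := by
        intro hc
        have h2 : tpos (mkW fL hfin (n:ℤ)) = 0 := hc.2.1
        rw [tpos_mkW] at h2
        omega
      have := wlen_eq_lenZ hexc
      have hlz : lenZ (mkW fL hfin n) = 2 * (Pm _ - Qm _) - |tpos _| := rfl
      rw [hlz, hPm, hQm, tpos_mkW, abs_of_nonneg (by positivity : (0:ℤ) ≤ n)] at this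
      have : (wlen (swsw MZ L genZ) (mkW fL hfin n) : ℤ) = n := by omega
      exact_mod_cast this
    · intro i
      rw [lamp_mkW]
      have hcond : (0:ℤ) ≤ ((i:ℕ):ℤ) ∧ ((i:ℕ):ℤ) ≤ (n:ℤ) :=
        ⟨by positivity, by exact_mod_cast Nat.lt_succ_iff.mp i.2⟩
      exact (dif_pos hcond).trans (congrArg f (Fin.ext (by simp)))
    · intro z hz
      rw [lamp_mkW, hfL]
      exact dif_neg (by omega)
  choose Φ hΦ1 hΦ2 hΦ3 hΦ4 using hval
  refine le_trans (le_of_eq ?_) (Nat.card_le_card_of_injective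
    (fun f => (⟨Φ f, hΦ1 f⟩ : ↥(wSphere (swsw MZ L genZ) n))) ?_)
  · rw [Nat.card_fun, Nat.card_eq_fintype_card (α := Fin (n+1)), Fintype.card_fin]
  · intro f f' hff
    funext i
    have := congrArg (fun x : ↥(wSphere (swsw MZ L genZ) n) => lamp x.val (i:ℤ)) hff
    simp only at this
    rw [hΦ3 f i, hΦ3 f' i] at this
    exact this

lemma sphere_card_pos [Finite L] (n : ℕ) :
    0 < Nat.card ↥(wSphere (swsw MZ L genZ) n) := by
  haveI := (sphere_finite (L := L) n).to_subtype
  haveI : Nonempty ↥(wSphere (swsw MZ L genZ) n) := ⟨⟨basePt n, basePt_mem_sphere n⟩⟩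
  exact Nat.card_pos

lemma trap_not_exc {g : Wreath MZ L} {n : ℕ} (hg : g ∈ TrapSet L n) : ¬ exceptionalP g := by
  intro hexc
  obtain ⟨-, h2, -⟩ := hg
  have h3 : Pm g = max (M0 g) (tpos g) := Pm_eq_max g
  rw [hexc.2.2.1, hexc.2.1] at h3
  have h4 := M0_nonneg g
  have : max (M0 g) 0 = M0 g := max_eq_left h4
  rw [this] at h3
  rw [hexc.2.1] at h2
  simp only [abs_zero] at h2
  omega

lemma trap_subset_sphere [Finite L] (n : ℕ) :
    TrapSet L n ⊆ wSphere (swsw MZ L genZ) n := by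
  intro g hg
  have h1 := wlen_eq_lenZ (trap_not_exc hg)
  have h2 := hg.1
  have : (wlen (swsw MZ L genZ) g : ℤ) = n := by omega
  exact_mod_cast this

lemma D_card_le [Finite L] (n : ℕ) :
    Nat.card ↥(wSphere (swsw MZ L genZ) n \ sphereInf (swsw MZ L genZ) n 0) ≤
      (2*n+1) * ((2*n+1) * Nat.card L ^ ((2*n)/3 + 1)) + Nat.card L := by
  have hTfin : (TrapSet L n).Finite := (sphere_finite n).subset (trap_subset_sphere n)
  have hEfin : (ExcSet L n).Finite := (sphere_finite n).subset (fun g hg => hg.2)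
  calc Nat.card ↥(wSphere (swsw MZ L genZ) n \ sphereInf (swsw MZ L genZ) n 0)
      = (wSphere (swsw MZ L genZ) n \ sphereInf (swsw MZ L genZ) n 0).ncard :=
        Nat.card_coe_set_eq _
    _ ≤ (TrapSet L n ∪ ExcSet L n).ncard :=
        Set.ncard_le_ncard (D_subset n) (hTfin.union hEfin)
    _ ≤ (TrapSet L n).ncard + (ExcSet L n).ncard := Set.ncard_union_le _ _
    _ = Nat.card ↥(TrapSet L n) + Nat.card ↥(ExcSet L n) := by
        rw [Nat.card_coe_set_eq, Nat.card_coe_set_eq]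
    _ ≤ (2*n+1) * ((2*n+1) * Nat.card L ^ ((2*n)/3 + 1)) + Nat.card L :=
        Nat.add_le_add (trap_card n) (exc_card n)

lemma D_card_lt [Finite L] (n : ℕ) :
    Nat.card ↥(wSphere (swsw MZ L genZ) n \ sphereInf (swsw MZ L genZ) n 0) <
      Nat.card ↥(wSphere (swsw MZ L genZ) n) := by
  rw [Nat.card_coe_set_eq, Nat.card_coe_set_eq]
  refine Set.ncard_lt_ncard ?_ (sphere_finite n)
  rw [Set.ssubset_def]
  refine ⟨Set.diff_subset, fun hsub => ?_⟩
  have := hsub (basePt_mem_sphere (L := L) n)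
  exact this.2 (basePt_mem_inf n)

lemma D_empty_of_subsingleton [Finite L] [Subsingleton L] (n : ℕ) :
    wSphere (swsw MZ L genZ) n \ sphereInf (swsw MZ L genZ) n 0 = (∅ : Set (Wreath MZ L)) := by
  rw [Set.eq_empty_iff_forall_notMem]
  intro g hg
  rcases D_subset n hg with h | h
  · have hM : M0 g = 0 := by
      rcases M0_mem g with hc | hc
      · exact hc
      · exact absurd (Subsingleton.elim _ _) hc
    have := abs_nonneg (tpos g)
    have := h.2.1
    omega
  · exact h.1.1 (eq_one_of_coords h.1.2.1 h.1.2.2.1 h.1.2.2.2 (Subsingleton.elim _ _))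

lemma numeric_key : ∀ n : ℕ, 100 ≤ n → (2*n+2)^6 * 1000^n ≤ 1458^n := by
  intro n hn
  induction n, hn using Nat.le_induction with
  | base => norm_num
  | succ n hn ih =>
    have hl : 101 * (2*(n+1)+2) ≤ 102 * (2*n+2) := by omega
    have h2 : (101 * (2*(n+1)+2))^6 ≤ (102*(2*n+2))^6 := Nat.pow_le_pow_left hl 6
    rw [mul_pow, mul_pow] at h2
    have h3 : 1000 * 102^6 ≤ 1458 * 101^6 := by norm_num
    have h6 : 101^6 * ((2*(n+1)+2)^6 * 1000) ≤ 101^6 * (1458 * (2*n+2)^6) := by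
      calc 101^6 * ((2*(n+1)+2)^6 * 1000) = 1000 * (101^6 * (2*(n+1)+2)^6) := by ring
        _ ≤ 1000 * (102^6 * (2*n+2)^6) := Nat.mul_le_mul_left _ h2
        _ = (1000 * 102^6) * (2*n+2)^6 := by ring
        _ ≤ (1458 * 101^6) * (2*n+2)^6 := Nat.mul_le_mul_right _ h3
        _ = 101^6 * (1458 * (2*n+2)^6) := by ring
    have h7 : (2*(n+1)+2)^6 * 1000 ≤ 1458 * (2*n+2)^6 :=
      Nat.le_of_mul_le_mul_left h6 (by norm_num)
    calc (2*(n+1)+2)^6 * 1000^(n+1) = ((2*(n+1)+2)^6 * 1000) * 1000^n := by ring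
      _ ≤ (1458 * (2*n+2)^6) * 1000^n := Nat.mul_le_mul_right _ h7
      _ = 1458 * ((2*n+2)^6 * 1000^n) := by ring
      _ ≤ 1458 * 1458^n := Nat.mul_le_mul_left _ ih
      _ = 1458^(n+1) := by ring

end FinalAux
/-- In `ℤ ≀ L` with the switch-walk-switch generating set, there is `α < 1`
with `|S(n) \ S(n)^∞| / |S(n)| ≤ αⁿ` for all `n`. -/
theorem stmt_8 {L : Type*} [Group L] [Finite L] :
    ∃ α : ℝ, α < 1 ∧ ∀ n : ℕ,
      (Nat.card ↥(wSphere (swsw MZ L genZ) n \ sphereInf (swsw MZ L genZ) n 0) : ℝ)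
          / (Nat.card ↥(wSphere (swsw MZ L genZ) n) : ℝ) ≤ α ^ n := by
  classical
  by_cases hL : Nat.card L ≤ 1
  · -- trivial lamp group : the difference is empty
    haveI : Subsingleton L := by
      have h1 : 0 < Nat.card L := Nat.card_pos
      have h2 : Nat.card L = 1 := by omega
      exact (Nat.card_eq_one_iff_unique.mp h2).1
    refine ⟨1/2, by norm_num, fun n => ?_⟩
    rw [D_empty_of_subsingleton n]
    have he : Nat.card ↥(∅ : Set (Wreath MZ L)) = 0 := by
      rw [Nat.card_coe_set_eq, Set.ncard_empty]
    rw [he]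
    simp only [Nat.cast_zero, zero_div]
    positivity
  · push_neg at hL
    have hcL2 : 2 ≤ Nat.card L := hL
    set cL := Nat.card L with hcL
    set M : ℕ := (Finset.range 100).sup
      (fun k => Nat.card ↥(wSphere (swsw MZ L genZ) k)) with hMdef
    have hM1 : 1 ≤ M :=
      le_trans (sphere_card_pos (L := L) 0)
        (Finset.le_sup (f := fun k => Nat.card ↥(wSphere (swsw MZ L genZ) k)) (by simp))
    have hMR : (1:ℝ) ≤ (M:ℝ) := by exact_mod_cast hM1
    set β : ℝ := 1 - 1/(99*(M:ℝ)) with hβdef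
    have hβpos : 0 < 1/(99*(M:ℝ)) := by positivity
    have hβle : 1/(99*(M:ℝ)) ≤ 1 := by
      rw [div_le_one (by positivity)]
      nlinarith
    have hβ0 : (0:ℝ) ≤ β := by rw [hβdef]; linarith
    have hβ1 : β ≤ 1 := by rw [hβdef]; linarith
    set α : ℝ := max (9/10) β with hαdef
    have hα1 : α < 1 := by
      apply max_lt (by norm_num)
      rw [hβdef]; linarith
    refine ⟨α, hα1, fun n => ?_⟩
    have hs0 : 0 < Nat.card ↥(wSphere (swsw MZ L genZ) n) := sphere_card_pos n
    have hsR : (0:ℝ) < (Nat.card ↥(wSphere (swsw MZ L genZ) n) : ℝ) := by exact_mod_cast hs0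
    rcases lt_or_ge n 100 with hn | hn
    · -- small n : use the crude bound 1 - 1/M
      have hDlt := D_card_lt (L := L) n
      have hsM : Nat.card ↥(wSphere (swsw MZ L genZ) n) ≤ M :=
        Finset.le_sup (f := fun k => Nat.card ↥(wSphere (swsw MZ L genZ) k))
          (Finset.mem_range.mpr hn)
      have hsMR : (Nat.card ↥(wSphere (swsw MZ L genZ) n) : ℝ) ≤ (M:ℝ) := by exact_mod_cast hsM
      have hD1 : (Nat.card ↥(wSphere (swsw MZ L genZ) n \ sphereInf (swsw MZ L genZ) n 0) : ℝ)
          ≤ (Nat.card ↥(wSphere (swsw MZ L genZ) n) : ℝ) - 1 := by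
        have : Nat.card ↥(wSphere (swsw MZ L genZ) n \ sphereInf (swsw MZ L genZ) n 0) + 1
            ≤ Nat.card ↥(wSphere (swsw MZ L genZ) n) := hDlt
        have := (Nat.cast_le (α := ℝ)).mpr this
        push_cast at this
        linarith
      have step1 : (Nat.card ↥(wSphere (swsw MZ L genZ) n \ sphereInf (swsw MZ L genZ) n 0) : ℝ)
          / (Nat.card ↥(wSphere (swsw MZ L genZ) n) : ℝ) ≤ 1 - 1/(M:ℝ) := by
        rw [div_le_iff₀ hsR]
        have hexp : (1 - 1/(M:ℝ)) * (Nat.card ↥(wSphere (swsw MZ L genZ) n) : ℝ)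
            = (Nat.card ↥(wSphere (swsw MZ L genZ) n) : ℝ)
              - (Nat.card ↥(wSphere (swsw MZ L genZ) n) : ℝ)/(M:ℝ) := by ring
        rw [hexp]
        have h2 : (Nat.card ↥(wSphere (swsw MZ L genZ) n) : ℝ)/(M:ℝ) ≤ 1 := by
          rw [div_le_one (by linarith)]
          exact hsMR
        linarith
      have step2 : 1 - 1/(M:ℝ) ≤ β^99 := by
        have hber := one_add_mul_le_pow (a := -(1/(99*(M:ℝ)))) (by linarith) 99
        have he1 : (1:ℝ) + 99 * (-(1/(99*(M:ℝ)))) = 1 - 1/(M:ℝ) := by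
          field_simp
          ring
        have he2 : (1:ℝ) + -(1/(99*(M:ℝ))) = β := by rw [hβdef]; ring
        push_cast at hber
        rw [he1, he2] at hber
        exact hber
      have step3 : β^99 ≤ β^n := pow_le_pow_of_le_one hβ0 hβ1 (by omega)
      have step4 : β^n ≤ α^n := pow_le_pow_left₀ hβ0 (le_max_right _ _) n
      exact le_trans step1 (le_trans step2 (le_trans step3 step4))
    · -- large n : the geometric bound
      set W : ℕ := (2*n)/3 with hWdef
      set j : ℕ := n - W with hjdef
      have hWn : W ≤ n := by omega
      have hj3 : n ≤ 3*j := by omega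
      have hjn : j ≤ n := by omega
      have hcLR : (2:ℝ) ≤ (cL:ℝ) := by exact_mod_cast hcL2
      have hcL0 : (0:ℝ) < (cL:ℝ) := by linarith
      have hcard1 : Nat.card ↥(wSphere (swsw MZ L genZ) n \ sphereInf (swsw MZ L genZ) n 0)
          ≤ (2*n+2)^2 * cL^(W+1) := by
        have h1 := D_card_le (L := L) n
        have h2 : cL ≤ cL^(W+1) := Nat.le_self_pow (by omega) _
        have h3 : (2*n+1)*((2*n+1)*cL^(W+1)) + cL ≤ (2*n+2)^2 * cL^(W+1) := by
          have h4 : (2*n+1)*((2*n+1)*cL^(W+1)) + cL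
              ≤ ((2*n+1)*(2*n+1) + 1) * cL^(W+1) := by
            have e : ((2*n+1)*(2*n+1) + 1) * cL^(W+1)
                = (2*n+1)*((2*n+1)*cL^(W+1)) + cL^(W+1) := by ring
            rw [e]
            exact Nat.add_le_add le_rfl h2
          refine le_trans h4 (Nat.mul_le_mul_right _ ?_)
          nlinarith
        exact le_trans h1 h3
      have hcard2 : cL^(n+1) ≤ Nat.card ↥(wSphere (swsw MZ L genZ) n) :=
        sphere_card_ge n (by omega)
      have hmain : (Nat.card ↥(wSphere (swsw MZ L genZ) n \ sphereInf (swsw MZ L genZ) n 0) : ℝ)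
          / (Nat.card ↥(wSphere (swsw MZ L genZ) n) : ℝ)
          ≤ (((2*n+2)^2 * cL^(W+1) : ℕ) : ℝ) / ((cL^(n+1) : ℕ) : ℝ) := by
        refine div_le_div₀ (by positivity) ?_ ?_ ?_
        · exact_mod_cast hcard1
        · have h0 : 0 < cL^(n+1) := pow_pos (by omega) _
          exact_mod_cast h0
        · exact_mod_cast hcard2
      have hpow : ((cL:ℝ))^(n+1) = (cL:ℝ)^(W+1) * (cL:ℝ)^j := by
        rw [← pow_add]
        congr 1
        omega
      have heq : (((2*n+2)^2 * cL^(W+1) : ℕ) : ℝ) / ((cL^(n+1) : ℕ) : ℝ)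
          = ((2*n+2:ℕ) : ℝ)^2 * (1/(cL:ℝ))^j := by
        have hne : ((cL^(n+1) : ℕ) : ℝ) ≠ 0 := by
          have h0 : 0 < cL^(n+1) := pow_pos (by omega) _
          exact_mod_cast h0.ne'
        rw [div_eq_iff hne]
        push_cast
        rw [hpow, one_div, inv_pow]
        have hne2 : ((cL:ℝ))^j ≠ 0 := by positivity
        field_simp
      have h12 : ((1:ℝ)/(cL:ℝ))^j ≤ (1/2:ℝ)^j := by
        refine pow_le_pow_left₀ (by positivity) ?_ j
        rw [div_le_div_iff₀ hcL0 (by norm_num)]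
        linarith
      have hfin1 : ((2*n+2:ℕ):ℝ)^2 * (1/2:ℝ)^j ≤ (9/10:ℝ)^n := by
        have hcube : (((2*n+2:ℕ):ℝ)^2 * (1/2:ℝ)^j)^3 ≤ ((9/10:ℝ)^n)^3 := by
          have e1 : (((2*n+2:ℕ):ℝ)^2 * (1/2:ℝ)^j)^3
              = ((2*n+2:ℕ):ℝ)^6 * (1/2:ℝ)^(3*j) := by
            rw [mul_pow, ← pow_mul, ← pow_mul, show 2*3 = 6 from rfl,
              show j*3 = 3*j by ring]
          have e2 : ((9/10:ℝ)^n)^3 = ((729:ℝ)/1000)^n := by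
            rw [← pow_mul, mul_comm, pow_mul]
            norm_num
          rw [e1, e2]
          have h3j : ((1:ℝ)/2)^(3*j) ≤ (1/2:ℝ)^n :=
            pow_le_pow_of_le_one (by norm_num) (by norm_num) hj3
          have hnum : ((2*n+2:ℕ):ℝ)^6 * (1/2:ℝ)^n ≤ ((729:ℝ)/1000)^n := by
            have hk := numeric_key n hn
            have hkR : (((2*n+2)^6 * 1000^n : ℕ) : ℝ) ≤ ((1458^n : ℕ) : ℝ) := by
              exact_mod_cast hk
            push_cast at hkR
            rw [show ((1:ℝ)/2)^n = 1/(2:ℝ)^n by rw [div_pow, one_pow],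
              show ((729:ℝ)/1000)^n = (729:ℝ)^n/(1000:ℝ)^n by rw [div_pow]]
            rw [mul_one_div, div_le_div_iff₀ (by positivity) (by positivity)]
            calc ((2*n+2:ℕ):ℝ)^6 * (1000:ℝ)^n ≤ (1458:ℝ)^n := by push_cast; linarith
              _ = (729:ℝ)^n * (2:ℝ)^n := by rw [← mul_pow]; norm_num
          calc ((2*n+2:ℕ):ℝ)^6 * (1/2:ℝ)^(3*j)
              ≤ ((2*n+2:ℕ):ℝ)^6 * (1/2:ℝ)^n := by
                refine mul_le_mul_of_nonneg_left h3j (by positivity)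
            _ ≤ ((729:ℝ)/1000)^n := hnum
        exact (pow_le_pow_iff_left₀ (by positivity) (by positivity) (by norm_num)).mp hcube
      have hfin2 : ((9:ℝ)/10)^n ≤ α^n := pow_le_pow_left₀ (by norm_num) (le_max_left _ _) n
      have hbridge : ((2*n+2:ℕ):ℝ)^2 * (1/(cL:ℝ))^j ≤ ((2*n+2:ℕ):ℝ)^2 * (1/2:ℝ)^j :=
        mul_le_mul_of_nonneg_left h12 (by positivity)
      calc (Nat.card ↥(wSphere (swsw MZ L genZ) n \ sphereInf (swsw MZ L genZ) n 0) : ℝ)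
          / (Nat.card ↥(wSphere (swsw MZ L genZ) n) : ℝ)
          ≤ (((2*n+2)^2 * cL^(W+1) : ℕ) : ℝ) / ((cL^(n+1) : ℕ) : ℝ) := hmain
        _ = ((2*n+2:ℕ):ℝ)^2 * (1/(cL:ℝ))^j := heq
        _ ≤ ((2*n+2:ℕ):ℝ)^2 * (1/2:ℝ)^j := hbridge
        _ ≤ (9/10:ℝ)^n := hfin1
        _ ≤ α^n := hfin2
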